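/- arXiv:math/0112196 — 7 statements merged into one kernel-verified Lean document; each statement's English description precedes it below -/
import Mathlib

section
/- For every real number r, ∫_ℝ (2/(e^x + e^{-x})) e^{irx} dx = π / cosh(πr/2); that is, the Fourier transform of the hyperbolic secant sech(x) = 2/(e^x+e^{-x}) is π·sech(πr/2). -/
open MeasureTheory Real Set

lemma cpow_pos_real {a : ℝ} (ha : 0 < a) (w : ℂ) :
    (a : ℂ) ^ w = Complex.exp (w * Real.log a) := by
  rw [Complex.cpow_def_of_ne_zero (by exact_mod_cast ha.ne'), Complex.ofReal_log ha.le,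
    mul_comm]

lemma step1 (r : ℝ) :
    ∫ t : ℝ in Ioi 0, (t : ℂ) ^ ((-1/2 : ℂ) + (r/2) * Complex.I) / (1 + t)
      = ∫ x : ℝ, ((2 / (Real.exp x + Real.exp (-x)) : ℝ) : ℂ)
          * Complex.exp (Complex.I * r * x) := by
  have himg : (fun x : ℝ => Real.exp (2 * x)) '' univ = Ioi 0 := by
    rw [image_univ]
    ext y
    constructor
    · rintro ⟨x, rfl⟩; exact Real.exp_pos _
    · intro hy
      refine ⟨Real.log y / 2, ?_⟩
      show Real.exp (2 * (Real.log y / 2)) = y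
      rw [mul_div_cancel₀ _ (by norm_num : (2:ℝ) ≠ 0), Real.exp_log hy]
  have hderiv : ∀ x ∈ (univ : Set ℝ),
      HasDerivWithinAt (fun x : ℝ => Real.exp (2 * x)) (2 * Real.exp (2 * x)) univ x := by
    intro x _
    have : HasDerivAt (fun x : ℝ => Real.exp (2 * x)) (Real.exp (2 * x) * 2) x :=
      (Real.hasDerivAt_exp (2 * x)).comp x (by simpa using (hasDerivAt_id x).const_mul 2)
    exact (by simpa [mul_comm] using this : HasDerivAt _ (2 * Real.exp (2*x)) x).hasDerivWithinAt
  have hinj : InjOn (fun x : ℝ => Real.exp (2 * x)) univ := by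
    intro a _ b _ h
    have := Real.exp_injective h
    linarith
  rw [← himg, integral_image_eq_integral_abs_deriv_smul MeasurableSet.univ hderiv hinj,
    setIntegral_univ]
  congr 1
  ext x
  have he : (0:ℝ) < Real.exp (2 * x) := Real.exp_pos _
  have hA : (0:ℝ) < Real.exp x := Real.exp_pos x
  rw [cpow_pos_real he, Real.log_exp, abs_of_pos (by positivity), Complex.real_smul]
  have e2 : Real.exp (2*x) = Real.exp x * Real.exp x := by rw [two_mul, Real.exp_add]
  have eneg : Real.exp (-x) = (Real.exp x)⁻¹ := Real.exp_neg x
  have key : Complex.exp (((-1/2 : ℂ) + (r/2) * Complex.I) * ((2*x:ℝ):ℂ))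
      = Complex.exp (Complex.I*r*x) * ((Real.exp x : ℂ))⁻¹ := by
    have h : ((-1/2 : ℂ) + (r/2) * Complex.I) * ((2*x:ℝ):ℂ) = Complex.I*r*x + (-(x:ℂ)) := by
      push_cast; ring
    rw [h, Complex.exp_add, Complex.exp_neg, ← Complex.ofReal_exp]
  rw [key, e2, eneg]
  have h1 : (Real.exp x : ℂ) ≠ 0 := by exact_mod_cast hA.ne'
  have h2 : ((1 : ℂ) + Real.exp x * Real.exp x) ≠ 0 := by
    exact_mod_cast (by positivity : (0:ℝ) < 1 + Real.exp x * Real.exp x).ne'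
  push_cast
  have hE : Complex.exp (x:ℂ) ≠ 0 := Complex.exp_ne_zero _
  field_simp [Complex.exp_ne_zero]
  ring_nf

lemma step2 (r : ℝ) :
    Complex.betaIntegral ((1/2 : ℂ) + (r/2) * Complex.I) (1 - ((1/2 : ℂ) + (r/2) * Complex.I))
      = ∫ t : ℝ in Ioi 0, (t : ℂ) ^ ((-1/2 : ℂ) + (r/2) * Complex.I) / (1 + t) := by
  set s : ℂ := (1/2 : ℂ) + (r/2) * Complex.I with hs
  have himg : (fun t : ℝ => t / (1 + t)) '' Ioi 0 = Ioo 0 1 := by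
    ext y
    constructor
    · rintro ⟨t, ht, rfl⟩
      have ht' : (0:ℝ) < t := ht
      constructor
      · positivity
      · rw [div_lt_one (by positivity)]; linarith
    · rintro ⟨hy0, hy1⟩
      refine ⟨y / (1 - y), by exact div_pos hy0 (by linarith), ?_⟩
      show y / (1 - y) / (1 + y / (1 - y)) = y
      have h1 : (1:ℝ) - y ≠ 0 := by linarith
      field_simp
      ring
  have hderiv : ∀ t ∈ Ioi (0:ℝ),
      HasDerivWithinAt (fun t : ℝ => t / (1 + t)) (1 / (1 + t)^2) (Ioi 0) t := by
    intro t ht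
    have ht' : (0:ℝ) < t := ht
    have h1 : (1:ℝ) + t ≠ 0 := by positivity
    have : HasDerivAt (fun t : ℝ => t / (1 + t)) ((1 * (1+t) - t * 1) / (1+t)^2) t :=
      (hasDerivAt_id t).div ((hasDerivAt_id t).const_add 1) h1
    exact (by simpa using this : HasDerivAt _ (1/(1+t)^2) t).hasDerivWithinAt
  have hinj : InjOn (fun t : ℝ => t / (1 + t)) (Ioi 0) := by
    intro a ha b hb h
    have ha' : (0:ℝ) < a := ha
    have hb' : (0:ℝ) < b := hb
    have h1 : (1:ℝ) + a ≠ 0 := by positivity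
    have h2 : (1:ℝ) + b ≠ 0 := by positivity
    field_simp at h
    linarith
  rw [Complex.betaIntegral, intervalIntegral.integral_of_le zero_le_one,
    integral_Ioc_eq_integral_Ioo, ← himg,
    integral_image_eq_integral_abs_deriv_smul measurableSet_Ioi hderiv hinj]
  refine setIntegral_congr_fun measurableSet_Ioi (fun t ht => ?_)
  have ht' : (0:ℝ) < t := ht
  have h1t : (0:ℝ) < 1 + t := by positivity
  have hx1 : (0:ℝ) < t / (1 + t) := by positivity
  have hx2 : (0:ℝ) < 1 - t / (1 + t) := by
    rw [sub_pos, div_lt_one h1t]; linarith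
  have he1 : ((t / (1 + t) : ℝ) : ℂ) ^ (s - 1)
      = Complex.exp ((s - 1) * (Real.log t - Real.log (1 + t))) := by
    rw [cpow_pos_real hx1, Real.log_div ht'.ne' h1t.ne']
    push_cast
    ring_nf
  have he2 : ((1 - t / (1 + t) : ℝ) : ℂ) ^ (1 - s - 1)
      = Complex.exp ((1 - s - 1) * (- Real.log (1 + t))) := by
    have : (1:ℝ) - t / (1 + t) = (1 + t)⁻¹ := by field_simp; ring
    rw [this, cpow_pos_real (by positivity), Real.log_inv]
    norm_num
  have hcast : ((1 - t / (1 + t) : ℝ) : ℂ) = 1 - ((t / (1 + t) : ℝ) : ℂ) := by push_cast; ring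
  rw [← hcast, he1, he2, abs_of_pos (show (0:ℝ) < 1/(1+t)^2 by positivity), Complex.real_smul]
  have hcomb : Complex.exp ((s - 1) * (Real.log t - Real.log (1 + t)))
        * Complex.exp ((1 - s - 1) * (- Real.log (1 + t)))
      = Complex.exp ((s - 1) * Real.log t) * Complex.exp (Real.log (1 + t)) := by
    rw [← Complex.exp_add, ← Complex.exp_add]
    congr 1
    ring
  rw [hcomb, ← cpow_pos_real ht']
  have hexp : Complex.exp ((Real.log (1 + t) : ℝ) : ℂ) = ((1 + t : ℝ) : ℂ) := by
    rw [← Complex.ofReal_exp, Real.exp_log h1t]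
  rw [hexp]
  have hne : ((1 + t : ℝ) : ℂ) ≠ 0 := by exact_mod_cast h1t.ne'
  have hs1 : s - 1 = (-1/2 : ℂ) + (r/2) * Complex.I := by rw [hs]; ring
  rw [hs1]
  have hne2 : (1 + (t:ℂ)) ≠ 0 := by
    exact_mod_cast (show ((1 + t : ℝ)) ≠ 0 from h1t.ne')
  push_cast
  rw [div_mul_eq_mul_div, one_mul, div_eq_div_iff (pow_ne_zero 2 hne2) hne2]
  ring

theorem stmt_1 (r : ℝ) :
    ∫ x : ℝ, ((2 / (Real.exp x + Real.exp (-x)) : ℝ) : ℂ) * Complex.exp (Complex.I * r * x)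
      = ((π / Real.cosh (π * r / 2) : ℝ) : ℂ) := by
  rw [← step1 r, ← step2 r]
  set s : ℂ := (1/2 : ℂ) + (r/2) * Complex.I with hs
  have hre1 : 0 < s.re := by simp [hs]
  have hre2 : 0 < (1 - s).re := by simp [hs]; norm_num
  have hbeta := Complex.Gamma_mul_Gamma_eq_betaIntegral hre1 hre2
  rw [show s + (1 - s) = 1 by ring, Complex.Gamma_one, one_mul] at hbeta
  rw [← hbeta, Complex.Gamma_mul_Gamma_one_sub]
  have hπs : (π : ℂ) * s = ((π/2 : ℝ) : ℂ) + ((π * r / 2 : ℝ) : ℂ) * Complex.I := by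
    rw [hs]; push_cast; ring
  rw [hπs, Complex.sin_add]
  have h1 : Complex.sin ((π/2 : ℝ) : ℂ) = 1 := by
    rw [← Complex.ofReal_sin, Real.sin_pi_div_two, Complex.ofReal_one]
  have h2 : Complex.cos ((π/2 : ℝ) : ℂ) = 0 := by
    rw [← Complex.ofReal_cos, Real.cos_pi_div_two, Complex.ofReal_zero]
  rw [h1, h2, one_mul, zero_mul, add_zero, Complex.cos_mul_I, ← Complex.ofReal_cosh,
    ← Complex.ofReal_div]
end

section
/- Let p > 0 and let g : ℝ → ℝ be defined by g(x) = (1 - |x|/p)·cos(πx/p) + (1/π)·sin(π|x|/p) for |x| ≤ p and g(x) = 0 for |x| > p. Then for every real r with p²r² ≠ π², ∫_ℝ g(x) e^{irx} dx = 8pπ²·cos²(pr/2) / (π² - p²r²)². In particular this Fourier transform is nonnegative on ℝ. -/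
open MeasureTheory Real
set_option maxHeartbeats 1000000 in

lemma gen_case (p r : ℝ) (hp : 0 < p) (hr : p^2*r^2 ≠ π^2) :
    ∫ x in (0:ℝ)..p, 2*((1-x/p)*Real.cos (π/p*x) + (1/π)*Real.sin (π/p*x))*Real.cos (r*x)
      = 8*p*π^2*Real.cos (p*r/2)^2/(π^2-p^2*r^2)^2 := by
  have hp' : p ≠ 0 := hp.ne'
  have hπ : (π:ℝ) ≠ 0 := Real.pi_ne_zero
  set u : ℝ := π/p - r with hu_def
  set v : ℝ := π/p + r with hv_def
  have hu : u ≠ 0 := by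
    intro h
    apply hr
    have : r = π/p := by rw [hu_def] at h; linarith
    rw [this]; field_simp
  have hv : v ≠ 0 := by
    intro h
    apply hr
    have : r = -(π/p) := by rw [hv_def] at h; linarith
    rw [this]; field_simp
  set F : ℝ → ℝ := fun x => (1-x/p)*(Real.sin (u*x)/u + Real.sin (v*x)/v)
      - Real.cos (u*x)*(1/(p*u^2)+1/(π*u)) - Real.cos (v*x)*(1/(p*v^2)+1/(π*v)) with hF
  have hderiv : ∀ x ∈ Set.uIcc (0:ℝ) p,
      HasDerivAt F (2*((1-x/p)*Real.cos (π/p*x) + (1/π)*Real.sin (π/p*x))*Real.cos (r*x)) x := by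
    intro x _
    have hsu : HasDerivAt (fun x => Real.sin (u*x)) (Real.cos (u*x) * u) x := by
      simpa using ((hasDerivAt_id x).const_mul u).sin
    have hsv : HasDerivAt (fun x => Real.sin (v*x)) (Real.cos (v*x) * v) x := by
      simpa using ((hasDerivAt_id x).const_mul v).sin
    have hcu : HasDerivAt (fun x => Real.cos (u*x)) (-Real.sin (u*x) * u) x := by
      simpa using ((hasDerivAt_id x).const_mul u).cos
    have hcv : HasDerivAt (fun x => Real.cos (v*x)) (-Real.sin (v*x) * v) x := by
      simpa using ((hasDerivAt_id x).const_mul v).cos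
    have hlin : HasDerivAt (fun x : ℝ => 1 - x/p) (-(1/p)) x := by
      simpa using ((hasDerivAt_id x).div_const p).const_sub 1
    have hD : HasDerivAt F
        ((-(1/p))*(Real.sin (u*x)/u + Real.sin (v*x)/v)
          + (1-x/p)*(Real.cos (u*x)*u/u + Real.cos (v*x)*v/v)
          - (-Real.sin (u*x) * u)*(1/(p*u^2)+1/(π*u))
          - (-Real.sin (v*x) * v)*(1/(p*v^2)+1/(π*v))) x := by
      exact ((hlin.mul ((hsu.div_const u).add (hsv.div_const v))).sub
        (hcu.mul_const _)).sub (hcv.mul_const _)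
    convert hD using 1
    have e1 : u*x = π/p*x - r*x := by rw [hu_def]; ring
    have e2 : v*x = π/p*x + r*x := by rw [hv_def]; ring
    rw [e1, e2, Real.cos_sub, Real.cos_add, Real.sin_sub, Real.sin_add]
    field_simp
    ring
  have hcont : IntervalIntegrable
      (fun x => 2*((1-x/p)*Real.cos (π/p*x) + (1/π)*Real.sin (π/p*x))*Real.cos (r*x))
      volume 0 p := by
    apply Continuous.intervalIntegrable
    fun_prop
  rw [intervalIntegral.integral_eq_sub_of_hasDerivAt hderiv hcont]
  have eup : u*p = π - r*p := by
    rw [hu_def, sub_mul, div_mul_cancel₀ _ hp']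
  have evp : v*p = π + r*p := by
    rw [hv_def, add_mul, div_mul_cancel₀ _ hp']
  have h1 : Real.sin (u*p) = Real.sin (r*p) := by rw [eup, Real.sin_pi_sub]
  have h2 : Real.cos (u*p) = -Real.cos (r*p) := by rw [eup, Real.cos_pi_sub]
  have h3 : Real.sin (v*p) = -Real.sin (r*p) := by rw [evp]; simp [Real.sin_add]
  have h4 : Real.cos (v*p) = -Real.cos (r*p) := by rw [evp]; simp [Real.cos_add]
  have hcrp : Real.cos (r*p) = 2*Real.cos (p*r/2)^2 - 1 := by
    rw [show r*p = 2*(p*r/2) from by ring]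
    exact Real.cos_two_mul _
  have hden : (π^2 - p^2*r^2) ≠ 0 := fun h => hr (by linarith)
  rw [hF]
  simp only [mul_zero, Real.sin_zero, Real.cos_zero, zero_div, add_zero, zero_add,
    sub_zero, zero_sub, one_mul]
  rw [h1, h2, h3, h4, hcrp]
  have hp2 : p - p = 0 := by ring
  have : (1 - p/p) = 0 := by field_simp; ring
  rw [this]
  field_simp [hu, hv, hden]
  rw [hu_def, hv_def]
  field_simp
  ring
open MeasureTheory Real

set_option maxHeartbeats 1000000 in
lemma sing_case (p : ℝ) (hp : 0 < p) :
    ∫ x in (0:ℝ)..p, 2*((1-x/p)*Real.cos (π/p*x) + (1/π)*Real.sin (π/p*x))*Real.cos (π/p*x)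
      = p/2 := by
  have hp' : p ≠ 0 := hp.ne'
  have hπ : (π:ℝ) ≠ 0 := Real.pi_ne_zero
  set a : ℝ := π/p with ha_def
  have ha : a ≠ 0 := div_ne_zero hπ hp'
  set G : ℝ → ℝ := fun x => x - x^2/(2*p) + (1-x/p)*Real.sin (2*a*x)/(2*a)
      - Real.cos (2*a*x)*(1/(4*p*a^2)+1/(2*a*π)) with hG
  have hderiv : ∀ x ∈ Set.uIcc (0:ℝ) p,
      HasDerivAt G (2*((1-x/p)*Real.cos (a*x) + (1/π)*Real.sin (a*x))*Real.cos (a*x)) x := by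
    intro x _
    have hs : HasDerivAt (fun x => Real.sin (2*a*x)) (Real.cos (2*a*x) * (2*a)) x := by
      simpa using ((hasDerivAt_id x).const_mul (2*a)).sin
    have hc : HasDerivAt (fun x => Real.cos (2*a*x)) (-Real.sin (2*a*x) * (2*a)) x := by
      simpa using ((hasDerivAt_id x).const_mul (2*a)).cos
    have hlin : HasDerivAt (fun x : ℝ => 1 - x/p) (-(1/p)) x := by
      simpa using ((hasDerivAt_id x).div_const p).const_sub 1
    have hq : HasDerivAt (fun x : ℝ => x - x^2/(2*p)) (1 - 2*x/(2*p)) x := by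
      have h0 : HasDerivAt (fun x : ℝ => x - x^2/(2*p)) _ x :=
        (hasDerivAt_id' x).sub ((hasDerivAt_pow 2 x).div_const (2*p))
      simpa using h0
    have hD : HasDerivAt G
        ((1 - 2*x/(2*p)) + ((-(1/p))*Real.sin (2*a*x) + (1-x/p)*(Real.cos (2*a*x)*(2*a)))/(2*a)
          - (-Real.sin (2*a*x) * (2*a))*(1/(4*p*a^2)+1/(2*a*π))) x := by
      exact (hq.add ((hlin.mul hs).div_const (2*a))).sub (hc.mul_const _)
    convert hD using 1
    have e1 : 2*a*x = a*x + a*x := by ring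
    rw [e1, Real.cos_add, Real.sin_add]
    rw [show Real.sin (a*x)*Real.sin (a*x) = 1 - Real.cos (a*x)*Real.cos (a*x) from by
      nlinarith [Real.sin_sq_add_cos_sq (a*x)]]
    field_simp
    ring
  have hcont : IntervalIntegrable
      (fun x => 2*((1-x/p)*Real.cos (a*x) + (1/π)*Real.sin (a*x))*Real.cos (a*x))
      volume 0 p := by
    apply Continuous.intervalIntegrable
    fun_prop
  have := intervalIntegral.integral_eq_sub_of_hasDerivAt hderiv hcont
  rw [this]
  have e2 : 2*a*p = 2*π := by rw [ha_def]; field_simp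
  rw [hG]
  simp only [e2]
  simp [Real.sin_two_pi, Real.cos_two_pi]
  field_simp
  ring
open MeasureTheory Real

set_option maxHeartbeats 1000000 in
lemma reduce (p : ℝ) (hp : 0 < p) (g : ℝ → ℝ)
    (hg : ∀ x : ℝ, g x = if |x| ≤ p then
      (1 - |x|/p) * Real.cos (π * x / p) + (1/π) * Real.sin (π * |x| / p) else 0) (r : ℝ) :
    ∫ x : ℝ, (g x : ℂ) * Complex.exp (Complex.I * r * x)
      = ((∫ x in (0:ℝ)..p,
          2*((1-x/p)*Real.cos (π/p*x) + (1/π)*Real.sin (π/p*x))*Real.cos (r*x) : ℝ) : ℂ) := by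
  have hp' : p ≠ 0 := hp.ne'
  have hπ : (π:ℝ) ≠ 0 := Real.pi_ne_zero
  set f : ℝ → ℝ := fun x => (1-x/p)*Real.cos (π/p*x) + (1/π)*Real.sin (π/p*x) with hf
  have hfc : Continuous f := by fun_prop
  -- g vanishes outside Ioo
  have hbd : ∀ x : ℝ, |x| = p → (1 - |x|/p) * Real.cos (π * x / p) + (1/π) * Real.sin (π * |x| / p) = 0 := by
    intro x hx
    rw [hx, div_self hp', mul_div_cancel_right₀ _ hp', Real.sin_pi]
    ring
  have hg0 : ∀ x : ℝ, p ≤ |x| → g x = 0 := by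
    intro x hx
    rw [hg]
    rcases eq_or_lt_of_le hx with h | h
    · rw [if_pos h.ge]
      exact hbd x h.symm
    · rw [if_neg (not_le.mpr h)]
  have hgc : Continuous g := by
    rw [funext hg]
    apply Continuous.if_le (by fun_prop) continuous_const (by fun_prop) continuous_const
    intro x hx
    exact hbd x hx
  have hcc : Continuous fun x : ℝ => (g x : ℂ) * Complex.exp (Complex.I * r * x) := by
    fun_prop
  -- restrict to interval
  have hsupp : Function.support (fun x : ℝ => (g x : ℂ) * Complex.exp (Complex.I * r * x))
      ⊆ Set.Ioc (-p) p := by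
    intro x hx
    simp only [Function.mem_support] at hx
    by_contra hxm
    apply hx
    have : p ≤ |x| := by
      simp only [Set.mem_Ioc, not_and_or, not_lt, not_le] at hxm
      rcases hxm with h | h
      · rw [abs_of_nonpos (by linarith)]; linarith
      · rw [abs_of_pos (by linarith)]; linarith
    rw [hg0 x this, Complex.ofReal_zero, zero_mul]
  rw [← intervalIntegral.integral_eq_integral_of_support_subset hsupp]
  -- split
  have hi1 : IntervalIntegrable (fun x : ℝ => (g x : ℂ) * Complex.exp (Complex.I * r * x))
      volume (-p) 0 := hcc.intervalIntegrable _ _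
  have hi2 : IntervalIntegrable (fun x : ℝ => (g x : ℂ) * Complex.exp (Complex.I * r * x))
      volume 0 p := hcc.intervalIntegrable _ _
  rw [← intervalIntegral.integral_add_adjacent_intervals hi1 hi2]
  -- the two pieces
  have hneg : ∀ x ∈ Set.uIcc (-p) (0:ℝ), (g x : ℂ) * Complex.exp (Complex.I * r * x)
      = (fun y : ℝ => (f y : ℂ) * Complex.exp (-(Complex.I * r * y))) (-x) := by
    intro x hx
    rw [Set.uIcc_of_le (by linarith), Set.mem_Icc] at hx
    have habs : |x| = -x := abs_of_nonpos hx.2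
    have : g x = f (-x) := by
      rw [hg, if_pos (by rw [habs]; linarith), hf, habs]
      simp only
      rw [show π/p*(-x) = -(π*x/p) by ring, Real.cos_neg]
      congr 2
      ring
    rw [this]
    simp only
    push_cast
    ring_nf
  have hpos : ∀ x ∈ Set.uIcc (0:ℝ) p, (g x : ℂ) * Complex.exp (Complex.I * r * x)
      = (f x : ℂ) * Complex.exp (Complex.I * r * x) := by
    intro x hx
    rw [Set.uIcc_of_le (by linarith), Set.mem_Icc] at hx
    have habs : |x| = x := abs_of_nonneg hx.1
    have : g x = f x := by
      rw [hg, if_pos (by rw [habs]; linarith), hf, habs]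
      simp only
      congr 2 <;> ring
    rw [this]
  rw [intervalIntegral.integral_congr hneg, intervalIntegral.integral_congr hpos]
  rw [intervalIntegral.integral_comp_neg (fun y : ℝ => (f y : ℂ) * Complex.exp (-(Complex.I * r * y)))]
  rw [neg_zero, neg_neg]
  have hii1 : IntervalIntegrable (fun y : ℝ => (f y : ℂ) * Complex.exp (-(Complex.I * r * y)))
      volume 0 p := by apply Continuous.intervalIntegrable; fun_prop
  have hii2 : IntervalIntegrable (fun y : ℝ => (f y : ℂ) * Complex.exp (Complex.I * r * y))
      volume 0 p := by apply Continuous.intervalIntegrable; fun_prop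
  rw [← intervalIntegral.integral_add hii1 hii2]
  rw [← intervalIntegral.integral_ofReal (f := fun x =>
    2*((1-x/p)*Real.cos (π/p*x) + (1/π)*Real.sin (π/p*x))*Real.cos (r*x))]
  apply intervalIntegral.integral_congr
  intro x _
  simp only
  have h2c : Complex.exp (-(Complex.I * r * x)) + Complex.exp (Complex.I * r * x)
      = 2 * Complex.cos (r * x) := by
    rw [Complex.two_cos]
    rw [show -((r:ℂ) * x) * Complex.I = -(Complex.I * r * x) by ring,
      show ((r:ℂ) * x) * Complex.I = Complex.I * r * x by ring]
    ring
  rw [mul_comm ((f x : ℂ)) (Complex.exp (-(Complex.I * r * x))), mul_comm ((f x : ℂ))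
    (Complex.exp (Complex.I * r * x)), ← add_mul, h2c,
    show ((r:ℂ) * x) = ((r*x:ℝ):ℂ) from by push_cast; ring, ← Complex.ofReal_cos, hf]
  push_cast
  ring

theorem stmt_3 (p : ℝ) (hp : 0 < p) (g : ℝ → ℝ)
    (hg : ∀ x : ℝ, g x = if |x| ≤ p then
      (1 - |x|/p) * Real.cos (π * x / p) + (1/π) * Real.sin (π * |x| / p) else 0) :
    (∀ r : ℝ, p^2 * r^2 ≠ π^2 →
      ∫ x : ℝ, (g x : ℂ) * Complex.exp (Complex.I * r * x)
        = ((8 * p * π^2 * Real.cos (p*r/2)^2 / (π^2 - p^2*r^2)^2 : ℝ) : ℂ)) ∧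
    (∀ r : ℝ, 0 ≤ (∫ x : ℝ, (g x : ℂ) * Complex.exp (Complex.I * r * x)).re) := by
  have hp' : p ≠ 0 := hp.ne'
  constructor
  · intro r hr
    rw [reduce p hp g hg r, gen_case p r hp hr]
  · intro r
    rw [reduce p hp g hg r, Complex.ofReal_re]
    by_cases hr : p^2 * r^2 = π^2
    · have h2 : (p*r - π)*(p*r + π) = 0 := by nlinarith
      have hval : (∫ x in (0:ℝ)..p,
          2*((1-x/p)*Real.cos (π/p*x) + (1/π)*Real.sin (π/p*x))*Real.cos (r*x)) = p/2 := by
        rcases mul_eq_zero.1 h2 with h | h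
        · have hrr : r = π/p := by field_simp; linarith
          rw [hrr]
          exact sing_case p hp
        · have hrr : r = -(π/p) := by field_simp; linarith
          have : ∀ x : ℝ, Real.cos (r*x) = Real.cos (π/p*x) := by
            intro x
            rw [hrr, show -(π/p)*x = -(π/p*x) by ring, Real.cos_neg]
          simp only [this]
          exact sing_case p hp
      rw [hval]
      positivity
    · rw [gen_case p r hp hr]
      positivity
end

section
/- Let p > 0 and let g : ℝ → ℝ be defined by g(x) = (4π(1 - |x|/p) + 2π(1 - |x|/p)·cos(2πx/p) + 3·sin(2π|x|/p)) / (6π) for |x| ≤ p and g(x) = 0 for |x| > p. Then for every real r with r ≠ 0 and p²r² ≠ 4π², ∫_ℝ g(x) e^{irx} dx = 128π⁴·sin²(pr/2) / (3p·r²·(4π² - p²r²)²). In particular this Fourier transform is nonnegative on ℝ. -/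
set_option maxHeartbeats 2000000

open MeasureTheory Real

private lemma aux_deriv1 (p k : ℝ) (hp : p ≠ 0) (hk : k ≠ 0) (x : ℝ) :
    HasDerivAt (fun y : ℝ => (1 - y/p) * Real.sin (k*y)/k - Real.cos (k*y)/(p*k^2))
      ((1 - x/p) * Real.cos (k*x)) x := by
  have h1 : HasDerivAt (fun y : ℝ => Real.sin (k*y)) (Real.cos (k*x) * k) x := by
    simpa using ((hasDerivAt_id x).const_mul k).sin
  have h2 : HasDerivAt (fun y : ℝ => Real.cos (k*y)) (-Real.sin (k*x) * k) x := by
    simpa using ((hasDerivAt_id x).const_mul k).cos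
  have h3 : HasDerivAt (fun y : ℝ => 1 - y/p) (-(1/p)) x := by
    simpa using ((hasDerivAt_id x).div_const p).const_sub 1
  have := ((h3.mul h1).div_const k).sub (h2.div_const (p*k^2))
  refine this.congr_deriv (Eq.symm ?_)
  field_simp
  ring

private lemma aux_deriv2 (k : ℝ) (hk : k ≠ 0) (x : ℝ) :
    HasDerivAt (fun y : ℝ => -Real.cos (k*y)/k) (Real.sin (k*x)) x := by
  have h2 : HasDerivAt (fun y : ℝ => Real.cos (k*y)) (-Real.sin (k*x) * k) x := by
    simpa using ((hasDerivAt_id x).const_mul k).cos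
  have := (h2.neg).div_const k
  refine this.congr_deriv (Eq.symm ?_)
  field_simp

private lemma aux_deriv3 (p : ℝ) (hp : p ≠ 0) (x : ℝ) :
    HasDerivAt (fun y : ℝ => y - y^2/(2*p)) (1 - x/p) x := by
  have := (hasDerivAt_id x).sub ((hasDerivAt_pow 2 x).div_const (2*p))
  refine this.congr_deriv (Eq.symm ?_)
  field_simp
  ring

private lemma eval_generic (p r : ℝ) (hp : 0 < p) (hr : r ≠ 0) (hpr : p^2*r^2 ≠ 4*π^2) :
    ∫ x in (0:ℝ)..p, (4*π*(1 - x/p) + 2*π*(1 - x/p) * Real.cos (2*π*x/p)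
        + 3 * Real.sin (2*π*x/p)) / (6*π) * Real.cos (r*x)
      = 64*π^4*Real.sin (p*r/2)^2/(3*p*r^2*(4*π^2-p^2*r^2)^2) := by
  have hπ : (0:ℝ) < π := Real.pi_pos
  have hp0 : p ≠ 0 := ne_of_gt hp
  set k1 : ℝ := 2*π/p + r with hk1def
  set k2 : ℝ := 2*π/p - r with hk2def
  have hprne : p*r ≠ 2*π ∧ p*r ≠ -(2*π) := by
    constructor <;> intro h <;> apply hpr <;> rw [show p^2*r^2 = (p*r)^2 by ring, h] <;> ring
  have hk1 : k1 ≠ 0 := by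
    intro h
    apply hprne.2
    have : r = -(2*π/p) := by linarith [hk1def ▸ h]
    rw [this]; field_simp
  have hk2 : k2 ≠ 0 := by
    intro h
    apply hprne.1
    have : r = 2*π/p := by have := hk2def ▸ h; linarith
    rw [this]; field_simp
  set F : ℝ → ℝ := fun y =>
    (4*π*((1 - y/p) * Real.sin (r*y)/r - Real.cos (r*y)/(p*r^2))
      + π*((1 - y/p) * Real.sin (k1*y)/k1 - Real.cos (k1*y)/(p*k1^2))
      + π*((1 - y/p) * Real.sin (k2*y)/k2 - Real.cos (k2*y)/(p*k2^2))
      + (3/2)*(-Real.cos (k1*y)/k1 + -Real.cos (k2*y)/k2)) / (6*π) with hF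
  have hderiv : ∀ x ∈ Set.uIcc (0:ℝ) p, HasDerivAt F
      ((4*π*(1 - x/p) + 2*π*(1 - x/p) * Real.cos (2*π*x/p)
        + 3 * Real.sin (2*π*x/p)) / (6*π) * Real.cos (r*x)) x := by
    intro x _
    have h1 := aux_deriv1 p r hp0 hr x
    have h2 := aux_deriv1 p k1 hp0 hk1 x
    have h3 := aux_deriv1 p k2 hp0 hk2 x
    have h4 := aux_deriv2 k1 hk1 x
    have h5 := aux_deriv2 k2 hk2 x
    have hD := ((((h1.const_mul (4*π)).add (h2.const_mul π)).add (h3.const_mul π)).add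
      ((h4.add h5).const_mul (3/2))).div_const (6*π)
    refine hD.congr_deriv (Eq.symm ?_)
    have e0 : 2*π*x/p = (2*π/p)*x := by ring
    have e1 : k1*x = (2*π/p)*x + r*x := by rw [hk1def]; ring
    have e2 : k2*x = (2*π/p)*x - r*x := by rw [hk2def]; ring
    rw [e0, e1, e2, Real.cos_add, Real.cos_sub, Real.sin_add, Real.sin_sub]
    field_simp
    ring
  have hcont : Continuous fun x : ℝ => (4*π*(1 - x/p) + 2*π*(1 - x/p) * Real.cos (2*π*x/p)
        + 3 * Real.sin (2*π*x/p)) / (6*π) * Real.cos (r*x) := by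
    fun_prop
  rw [intervalIntegral.integral_eq_sub_of_hasDerivAt hderiv
    (hcont.intervalIntegrable (μ := volume) 0 p)]
  have hsk1 : Real.sin (k1*p) = Real.sin (p*r) := by
    rw [show k1*p = 2*π + p*r by rw [hk1def]; field_simp, Real.sin_add]
    simp
  have hsk2 : Real.sin (k2*p) = -Real.sin (p*r) := by
    rw [show k2*p = 2*π - p*r by rw [hk2def]; field_simp, Real.sin_sub]
    simp
  have hck1 : Real.cos (k1*p) = Real.cos (p*r) := by
    rw [show k1*p = 2*π + p*r by rw [hk1def]; field_simp, Real.cos_add]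
    simp
  have hck2 : Real.cos (k2*p) = Real.cos (p*r) := by
    rw [show k2*p = 2*π - p*r by rw [hk2def]; field_simp, Real.cos_sub]
    simp
  have hsr : Real.sin (r*p) = Real.sin (p*r) := by rw [mul_comm]
  have hcr : Real.cos (r*p) = Real.cos (p*r) := by rw [mul_comm]
  have hcpr : Real.cos (p*r) = 1 - 2*Real.sin (p*r/2)^2 := by
    have := Real.sin_sq_eq_half_sub (p*r/2)
    rw [show 2*(p*r/2) = p*r by ring] at this
    linarith
  simp only [hF]
  rw [hsk1, hsk2, hck1, hck2, hsr, hcr, hcpr]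
  have hpp : p/p = 1 := div_self hp0
  rw [hpp]
  simp only [mul_zero, zero_mul, Real.sin_zero, Real.cos_zero, sub_self]
  have h4 : (4:ℝ)*π^2 - p^2*r^2 ≠ 0 := by
    intro h; apply hpr; linarith
  have hA : (2*π + p*r) ≠ 0 := by intro h; exact hprne.2 (by linarith)
  have hB : (2*π - p*r) ≠ 0 := by intro h; exact hprne.1 (by linarith)
  rw [show k1 = (2*π + p*r)/p by rw [hk1def]; field_simp,
      show k2 = (2*π - p*r)/p by rw [hk2def]; field_simp]
  field_simp [show π*2 + r*p ≠ 0 by contrapose! hA; linarith,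
    show π*2 - r*p ≠ 0 by contrapose! hB; linarith,
    show 4*π^2 - r^2*p^2 ≠ 0 by contrapose! h4; linarith]
  ring

private lemma eval_zero (p : ℝ) (hp : 0 < p) :
    ∫ x in (0:ℝ)..p, (4*π*(1 - x/p) + 2*π*(1 - x/p) * Real.cos (2*π*x/p)
        + 3 * Real.sin (2*π*x/p)) / (6*π) = p/3 := by
  have hπ : (0:ℝ) < π := Real.pi_pos
  have hp0 : p ≠ 0 := ne_of_gt hp
  have ha : (2*π/p) ≠ 0 := by positivity
  set F : ℝ → ℝ := fun y =>
    (4*π*(y - y^2/(2*p))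
      + 2*π*((1 - y/p) * Real.sin ((2*π/p)*y)/(2*π/p) - Real.cos ((2*π/p)*y)/(p*(2*π/p)^2))
      + 3*(-Real.cos ((2*π/p)*y)/(2*π/p))) / (6*π) with hF
  have hderiv : ∀ x ∈ Set.uIcc (0:ℝ) p, HasDerivAt F
      ((4*π*(1 - x/p) + 2*π*(1 - x/p) * Real.cos (2*π*x/p)
        + 3 * Real.sin (2*π*x/p)) / (6*π)) x := by
    intro x _
    have h1 := aux_deriv3 p hp0 x
    have h2 := aux_deriv1 p (2*π/p) hp0 ha x
    have h3 := aux_deriv2 (2*π/p) ha x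
    have hD := (((h1.const_mul (4*π)).add (h2.const_mul (2*π))).add
      (h3.const_mul 3)).div_const (6*π)
    refine hD.congr_deriv (Eq.symm ?_)
    rw [show 2*π*x/p = (2*π/p)*x by ring]
    ring
  have hcont : Continuous fun x : ℝ => (4*π*(1 - x/p) + 2*π*(1 - x/p) * Real.cos (2*π*x/p)
        + 3 * Real.sin (2*π*x/p)) / (6*π) := by fun_prop
  rw [intervalIntegral.integral_eq_sub_of_hasDerivAt hderiv
    (hcont.intervalIntegrable (μ := volume) 0 p)]
  simp only [hF]
  rw [show (2*π/p)*p = 2*π by field_simp]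
  simp only [mul_zero, zero_mul, Real.sin_zero, Real.cos_zero, Real.sin_two_pi,
    Real.cos_two_pi, div_self hp0]
  field_simp
  ring

private lemma eval_special (p : ℝ) (hp : 0 < p) :
    ∫ x in (0:ℝ)..p, (4*π*(1 - x/p) + 2*π*(1 - x/p) * Real.cos (2*π*x/p)
        + 3 * Real.sin (2*π*x/p)) / (6*π) * Real.cos ((2*π/p)*x) = p/12 := by
  have hπ : (0:ℝ) < π := Real.pi_pos
  have hp0 : p ≠ 0 := ne_of_gt hp
  have ha : (2*π/p) ≠ 0 := by positivity
  have ha2 : (2*(2*π/p)) ≠ 0 := by positivity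
  set F : ℝ → ℝ := fun y =>
    (4*π*((1 - y/p) * Real.sin ((2*π/p)*y)/(2*π/p) - Real.cos ((2*π/p)*y)/(p*(2*π/p)^2))
      + π*(y - y^2/(2*p))
      + π*((1 - y/p) * Real.sin ((2*(2*π/p))*y)/(2*(2*π/p))
            - Real.cos ((2*(2*π/p))*y)/(p*(2*(2*π/p))^2))
      + (3/2)*(-Real.cos ((2*(2*π/p))*y)/(2*(2*π/p)))) / (6*π) with hF
  have hderiv : ∀ x ∈ Set.uIcc (0:ℝ) p, HasDerivAt F
      ((4*π*(1 - x/p) + 2*π*(1 - x/p) * Real.cos (2*π*x/p)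
        + 3 * Real.sin (2*π*x/p)) / (6*π) * Real.cos ((2*π/p)*x)) x := by
    intro x _
    have h1 := aux_deriv1 p (2*π/p) hp0 ha x
    have h2 := aux_deriv3 p hp0 x
    have h3 := aux_deriv1 p (2*(2*π/p)) hp0 ha2 x
    have h4 := aux_deriv2 (2*(2*π/p)) ha2 x
    have hD := ((((h1.const_mul (4*π)).add (h2.const_mul π)).add (h3.const_mul π)).add
      (h4.const_mul (3/2))).div_const (6*π)
    refine hD.congr_deriv (Eq.symm ?_)
    have e0 : 2*π*x/p = (2*π/p)*x := by ring
    have e1 : (2*(2*π/p))*x = (2*π/p)*x + (2*π/p)*x := by ring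
    rw [e0, e1, Real.cos_add, Real.sin_add]
    set c := Real.cos ((2*π/p)*x) with hc
    set s := Real.sin ((2*π/p)*x) with hs
    have hsc : s^2 + c^2 = 1 := Real.sin_sq_add_cos_sq ((2*π/p)*x)
    field_simp
    linear_combination (2*π*(p-x)) * hsc
  have hcont : Continuous fun x : ℝ => (4*π*(1 - x/p) + 2*π*(1 - x/p) * Real.cos (2*π*x/p)
        + 3 * Real.sin (2*π*x/p)) / (6*π) * Real.cos ((2*π/p)*x) := by fun_prop
  rw [intervalIntegral.integral_eq_sub_of_hasDerivAt hderiv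
    (hcont.intervalIntegrable (μ := volume) 0 p)]
  simp only [hF]
  rw [show (2*(2*π/p))*p = 2*(2*π) by field_simp,
      show (2*π/p)*p = 2*π by field_simp]
  rw [show Real.cos (2*(2*π)) = 1 by rw [Real.cos_two_mul, Real.cos_two_pi]; norm_num,
      show Real.sin (2*(2*π)) = 0 by rw [Real.sin_two_mul, Real.sin_two_pi]; ring]
  simp only [mul_zero, zero_mul, Real.sin_zero, Real.cos_zero, Real.sin_two_pi,
    Real.cos_two_pi, div_self hp0]
  field_simp
  ring

theorem stmt_4 (p : ℝ) (hp : 0 < p) (g : ℝ → ℝ)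
    (hg : ∀ x : ℝ, g x = if |x| ≤ p then
      (4*π*(1 - |x|/p) + 2*π*(1 - |x|/p) * Real.cos (2*π*x/p) + 3 * Real.sin (2*π*|x|/p)) / (6*π)
      else 0) :
    (∀ r : ℝ, r ≠ 0 → p^2 * r^2 ≠ 4*π^2 →
      ∫ x : ℝ, (g x : ℂ) * Complex.exp (Complex.I * r * x)
        = ((128 * π^4 * Real.sin (p*r/2)^2 / (3 * p * r^2 * (4*π^2 - p^2*r^2)^2) : ℝ) : ℂ)) ∧
    (∀ r : ℝ, 0 ≤ (∫ x : ℝ, (g x : ℂ) * Complex.exp (Complex.I * r * x)).re) := by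
  have hπ : (0:ℝ) < π := Real.pi_pos
  have hp0 : p ≠ 0 := ne_of_gt hp
  set φ : ℝ → ℝ := fun x =>
    (4*π*(1 - |x|/p) + 2*π*(1 - |x|/p) * Real.cos (2*π*x/p) + 3 * Real.sin (2*π*|x|/p)) / (6*π)
    with hφ
  set ψ : ℝ → ℝ := fun x =>
    (4*π*(1 - x/p) + 2*π*(1 - x/p) * Real.cos (2*π*x/p) + 3 * Real.sin (2*π*x/p)) / (6*π)
    with hψ
  have hφcont : Continuous φ := by
    rw [hφ]; fun_prop
  have hgind : ∀ f : ℝ → ℝ,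
      (fun x => g x * f x) = Set.indicator (Set.Icc (-p) p) (fun x => φ x * f x) := by
    intro f
    funext x
    by_cases hx : |x| ≤ p
    · rw [Set.indicator_of_mem (by rw [Set.mem_Icc, ← abs_le]; exact hx), hg, if_pos hx]
    · rw [Set.indicator_of_notMem (by rw [Set.mem_Icc, ← abs_le]; exact hx), hg, if_neg hx,
        zero_mul]
  have hint : ∀ f : ℝ → ℝ, Continuous f → Integrable (fun x => g x * f x) := by
    intro f hf
    rw [hgind f]
    exact ((hφcont.mul hf).integrableOn_Icc).integrable_indicator measurableSet_Icc
  have hφeven : ∀ x : ℝ, φ (-x) = φ x := by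
    intro x
    rw [hφ]
    simp only [abs_neg]
    rw [show 2*π*(-x)/p = -(2*π*x/p) by ring, Real.cos_neg]
  have hred : ∀ r : ℝ, ∫ x : ℝ, (g x : ℂ) * Complex.exp (Complex.I * r * x)
      = ((2 * ∫ x in (0:ℝ)..p, ψ x * Real.cos (r*x) : ℝ) : ℂ) := by
    intro r
    have hpt : ∀ x : ℝ, (g x : ℂ) * Complex.exp (Complex.I * r * x)
        = ((g x * Real.cos (r*x) : ℝ) : ℂ) + ((g x * Real.sin (r*x) : ℝ) : ℂ) * Complex.I := by
      intro x
      rw [show Complex.I * (r:ℂ) * (x:ℂ) = ((r*x : ℝ) : ℂ) * Complex.I by push_cast; ring,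
        Complex.exp_mul_I]
      push_cast
      ring
    have hic : Integrable (fun x => g x * Real.cos (r*x)) := hint _ (by fun_prop)
    have his : Integrable (fun x => g x * Real.sin (r*x)) := hint _ (by fun_prop)
    calc ∫ x : ℝ, (g x : ℂ) * Complex.exp (Complex.I * r * x)
        = ∫ x : ℝ, (((g x * Real.cos (r*x) : ℝ) : ℂ)
            + ((g x * Real.sin (r*x) : ℝ) : ℂ) * Complex.I) := by
          simp only [hpt]
      _ = ((∫ x : ℝ, g x * Real.cos (r*x) : ℝ) : ℂ)
            + ((∫ x : ℝ, g x * Real.sin (r*x) : ℝ) : ℂ) * Complex.I := by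
          have hic' : Integrable (fun x : ℝ => ((g x * Real.cos (r*x) : ℝ) : ℂ)) := hic.ofReal
          have his' : Integrable (fun x : ℝ => ((g x * Real.sin (r*x) : ℝ) : ℂ) * Complex.I) :=
            his.ofReal.mul_const Complex.I
          rw [integral_add hic' his', integral_mul_const]
          congr 1
          · exact integral_ofReal
          · congr 1
            exact integral_ofReal
      _ = ((∫ x : ℝ, g x * Real.cos (r*x) : ℝ) : ℂ) := by
          have hodd : ∫ x : ℝ, g x * Real.sin (r*x) = 0 := by
            have h1 : (∫ x : ℝ, g (-x) * Real.sin (r*(-x)))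
                = ∫ x : ℝ, g x * Real.sin (r*x) :=
              MeasureTheory.integral_neg_eq_self (fun x => g x * Real.sin (r*x)) volume
            have h2 : ∀ x : ℝ, g (-x) * Real.sin (r*(-x)) = -(g x * Real.sin (r*x)) := by
              intro x
              have hge : g (-x) = g x := by
                rw [hg, hg]
                simp only [abs_neg]
                rw [show 2*π*(-x)/p = -(2*π*x/p) by ring, Real.cos_neg]
              rw [hge, show r*(-x) = -(r*x) by ring, Real.sin_neg]
              ring
            simp only [h2] at h1
            rw [integral_neg] at h1
            linarith
          rw [hodd]
          simp
      _ = ((2 * ∫ x in (0:ℝ)..p, ψ x * Real.cos (r*x) : ℝ) : ℂ) := by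
          norm_cast
          rw [hgind (fun x => Real.cos (r*x)), integral_indicator measurableSet_Icc,
            MeasureTheory.integral_Icc_eq_integral_Ioc,
            ← intervalIntegral.integral_of_le (by linarith : -p ≤ p)]
          have hii1 : IntervalIntegrable (fun x => φ x * Real.cos (r*x)) volume (-p) 0 :=
            (hφcont.mul (by fun_prop)).intervalIntegrable _ _
          have hii2 : IntervalIntegrable (fun x => φ x * Real.cos (r*x)) volume 0 p :=
            (hφcont.mul (by fun_prop)).intervalIntegrable _ _
          rw [← intervalIntegral.integral_add_adjacent_intervals hii1 hii2]
          have hneg : ∫ x in (-p)..(0:ℝ), φ x * Real.cos (r*x)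
              = ∫ x in (0:ℝ)..p, φ x * Real.cos (r*x) := by
            have := intervalIntegral.integral_comp_neg
              (a := (0:ℝ)) (b := p) (fun x => φ x * Real.cos (r*x))
            rw [neg_zero] at this
            rw [← this]
            apply intervalIntegral.integral_congr
            intro x _
            simp only
            rw [hφeven, show r*(-x) = -(r*x) by ring, Real.cos_neg]
          have hpsi : ∫ x in (0:ℝ)..p, φ x * Real.cos (r*x)
              = ∫ x in (0:ℝ)..p, ψ x * Real.cos (r*x) := by
            apply intervalIntegral.integral_congr
            intro x hx
            rw [Set.uIcc_of_le hp.le, Set.mem_Icc] at hx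
            simp only [hφ, hψ]
            rw [abs_of_nonneg hx.1]
          rw [hneg, hpsi]
          ring
  constructor
  · intro r hr hpr
    rw [hred r]
    exact Complex.ofReal_inj.mpr (by rw [eval_generic p r hp hr hpr]; ring)
  · intro r
    rw [hred r, Complex.ofReal_re]
    rcases eq_or_ne r 0 with hr0 | hr0
    · rw [hr0]
      simp only [zero_mul, Real.cos_zero, mul_one]
      rw [eval_zero p hp]
      positivity
    · rcases eq_or_ne (p^2*r^2) (4*π^2) with hpr | hpr
      · have habs : p*r = 2*π ∨ p*r = -(2*π) := by
          have h0 : (p*r - 2*π)*(p*r + 2*π) = 0 := by linear_combination hpr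
          rcases mul_eq_zero.mp h0 with h | h
          · left; linarith
          · right; linarith
        have hval : (∫ x in (0:ℝ)..p, ψ x * Real.cos (r*x)) = p/12 := by
          rcases habs with h | h
          · have hrv : r = 2*π/p := by field_simp; linarith
            have hco : ∀ x : ℝ, Real.cos (r*x) = Real.cos ((2*π/p)*x) := by
              intro x; rw [hrv]
            simp only [hco]
            exact eval_special p hp
          · have hrv : r = -(2*π/p) := by field_simp; linarith
            have hco : ∀ x : ℝ, Real.cos (r*x) = Real.cos ((2*π/p)*x) := by
              intro x
              rw [show r*x = -((2*π/p)*x) by rw [hrv]; ring, Real.cos_neg]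
            simp only [hco]
            exact eval_special p hp
        rw [hval]
        positivity
      · rw [eval_generic p r hp hr0 hpr]
        positivity
end

section
/- Let p > 0 and let g : ℝ → ℝ be defined by g(x) = (54π(1 - |x|/p)·cos(πx/p) + 6π(1 - |x|/p)·cos(3πx/p) + 27·sin(π|x|/p) + 11·sin(3π|x|/p)) / (60π) for |x| ≤ p and g(x) = 0 for |x| > p. Then for every real r with p²r² ∉ {π², 9π²}, ∫_ℝ g(x) e^{irx} dx = 2304·p·π⁶·cos²(pr/2) / (5·(9π⁴ - 10p²π²r² + p⁴r⁴)²). In particular this Fourier transform is nonnegative on ℝ. -/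
open MeasureTheory Real

noncomputable def blk (p k r A B C D x : ℝ) : ℝ :=
  (1 - x/p)*(A * Real.sin (k*x/p) * Real.cos (r*x) + B * Real.cos (k*x/p) * Real.sin (r*x))
    + C * Real.cos (k*x/p) * Real.cos (r*x) + D * Real.sin (k*x/p) * Real.sin (r*x)

noncomputable def blk' (p k r A B C D x : ℝ) : ℝ :=
  -(1/p)*(A * Real.sin (k*x/p) * Real.cos (r*x) + B * Real.cos (k*x/p) * Real.sin (r*x))
  + (1 - x/p)*(A * (k/p * Real.cos (k*x/p)) * Real.cos (r*x)
      + A * Real.sin (k*x/p) * (-(r * Real.sin (r*x)))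
      + B * (-(k/p * Real.sin (k*x/p))) * Real.sin (r*x)
      + B * Real.cos (k*x/p) * (r * Real.cos (r*x)))
  + (C * (-(k/p * Real.sin (k*x/p))) * Real.cos (r*x) + C * Real.cos (k*x/p) * (-(r * Real.sin (r*x))))
  + (D * (k/p * Real.cos (k*x/p)) * Real.sin (r*x) + D * Real.sin (k*x/p) * (r * Real.cos (r*x)))

lemma blk_deriv (p k r A B C D x : ℝ) : HasDerivAt (blk p k r A B C D) (blk' p k r A B C D x) x := by
  have hlin : HasDerivAt (fun x : ℝ => k*x/p) (k/p) x := by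
    simpa using ((hasDerivAt_id x).const_mul k).div_const p
  have hlin2 : HasDerivAt (fun x : ℝ => r*x) r x := by
    simpa using (hasDerivAt_id x).const_mul r
  have hS : HasDerivAt (fun x : ℝ => Real.sin (k*x/p)) (k/p * Real.cos (k*x/p)) x := by
    simpa [mul_comm, Function.comp_def] using (Real.hasDerivAt_sin (k*x/p)).comp x hlin
  have hC : HasDerivAt (fun x : ℝ => Real.cos (k*x/p)) (-(k/p * Real.sin (k*x/p))) x := by
    simpa [mul_comm, Function.comp_def] using (Real.hasDerivAt_cos (k*x/p)).comp x hlin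
  have hSr : HasDerivAt (fun x : ℝ => Real.sin (r*x)) (r * Real.cos (r*x)) x := by
    simpa [mul_comm, Function.comp_def] using (Real.hasDerivAt_sin (r*x)).comp x hlin2
  have hCr : HasDerivAt (fun x : ℝ => Real.cos (r*x)) (-(r * Real.sin (r*x))) x := by
    simpa [mul_comm, Function.comp_def] using (Real.hasDerivAt_cos (r*x)).comp x hlin2
  have hone : HasDerivAt (fun x : ℝ => 1 - x/p) (-(1/p)) x := by
    simpa [Pi.sub_def] using (hasDerivAt_const x (1:ℝ)).sub ((hasDerivAt_id x).div_const p)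
  have h1 := hone.mul (((hS.const_mul A).mul hCr).add ((hC.const_mul B).mul hSr))
  have h2 := (hC.const_mul C).mul hCr
  have h3 := (hS.const_mul D).mul hSr
  have h := (h1.add h2).add h3
  refine h.congr_deriv ?_
  unfold blk'
  simp only [Pi.mul_apply, Pi.add_apply]
  ring

lemma integ_aux (p : ℝ) (hp : 0 < p) (g : ℝ → ℝ)
    (hg : ∀ x : ℝ, g x = if |x| ≤ p then
      (54*π*(1 - |x|/p) * Real.cos (π*x/p) + 6*π*(1 - |x|/p) * Real.cos (3*π*x/p)
        + 27 * Real.sin (π*|x|/p) + 11 * Real.sin (3*π*|x|/p)) / (60*π)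
      else 0)
    (ψ : ℝ → ℝ) (hψ : Continuous ψ) :
    Integrable (fun x => g x * ψ x) := by
  have hφ : Continuous (fun x : ℝ =>
      (54*π*(1 - |x|/p) * Real.cos (π*x/p) + 6*π*(1 - |x|/p) * Real.cos (3*π*x/p)
        + 27 * Real.sin (π*|x|/p) + 11 * Real.sin (3*π*|x|/p)) / (60*π)) := by fun_prop
  have heq : (fun x => g x * ψ x) = Set.indicator (Set.Icc (-p) p)
      (fun x => ((54*π*(1 - |x|/p) * Real.cos (π*x/p) + 6*π*(1 - |x|/p) * Real.cos (3*π*x/p)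
        + 27 * Real.sin (π*|x|/p) + 11 * Real.sin (3*π*|x|/p)) / (60*π)) * ψ x) := by
    funext x
    by_cases hx : |x| ≤ p
    · rw [Set.indicator_of_mem (by rwa [Set.mem_Icc, ← abs_le]), hg x, if_pos hx]
    · rw [Set.indicator_of_notMem (by rwa [Set.mem_Icc, ← abs_le]), hg x, if_neg hx, zero_mul]
  rw [heq, integrable_indicator_iff measurableSet_Icc]
  exact (hφ.mul hψ).integrableOn_Icc

set_option maxHeartbeats 2000000 in
lemma key (p : ℝ) (hp : 0 < p) (g : ℝ → ℝ)
    (hg : ∀ x : ℝ, g x = if |x| ≤ p then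
      (54*π*(1 - |x|/p) * Real.cos (π*x/p) + 6*π*(1 - |x|/p) * Real.cos (3*π*x/p)
        + 27 * Real.sin (π*|x|/p) + 11 * Real.sin (3*π*|x|/p)) / (60*π)
      else 0)
    (r : ℝ) (hint : Integrable (fun x => g x * Real.cos (r*x)))
    (h1 : p^2 * r^2 ≠ π^2) (h2 : p^2 * r^2 ≠ 9*π^2) :
    ∫ x : ℝ, g x * Real.cos (r*x)
      = 2304 * p * π^6 * Real.cos (p*r/2)^2 / (5 * (9*π^4 - 10*p^2*π^2*r^2 + p^4*r^4)^2) := by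
  have hπ := Real.pi_pos
  have hπ' := Real.pi_ne_zero
  have hp' := hp.ne'
  have ha : π^2 - p^2*r^2 ≠ 0 := sub_ne_zero.mpr (Ne.symm h1)
  have hb : 9*π^2 - p^2*r^2 ≠ 0 := sub_ne_zero.mpr (Ne.symm h2)
  set a := π^2 - p^2*r^2 with hadef
  set b := 9*π^2 - p^2*r^2 with hbdef
  set F : ℝ → ℝ := fun x =>
    (blk p π r (54*π^2*p/a) (-(54*π*r*p^2)/a)
        (-(54*π*(π^2+p^2*r^2)*p)/a^2 - 27*π*p/a) (-(108*π^2*r*p^2)/a^2 - 27*r*p^2/a) x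
     + blk p (3*π) r (18*π^2*p/b) (-(6*π*r*p^2)/b)
        (-(6*π*(9*π^2+p^2*r^2)*p)/b^2 - 33*π*p/b) (-(36*π^2*r*p^2)/b^2 - 11*r*p^2/b) x) / (60*π)
    with hFdef
  have hF : ∀ x ∈ Set.uIcc (0:ℝ) p, HasDerivAt F (g x * Real.cos (r*x)) x := by
    intro x hx
    rw [Set.uIcc_of_le hp.le] at hx
    have hax : |x| = x := abs_of_nonneg hx.1
    have h := ((blk_deriv p π r (54*π^2*p/a) (-(54*π*r*p^2)/a)
        (-(54*π*(π^2+p^2*r^2)*p)/a^2 - 27*π*p/a) (-(108*π^2*r*p^2)/a^2 - 27*r*p^2/a) x).add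
      (blk_deriv p (3*π) r (18*π^2*p/b) (-(6*π*r*p^2)/b)
        (-(6*π*(9*π^2+p^2*r^2)*p)/b^2 - 33*π*p/b) (-(36*π^2*r*p^2)/b^2 - 11*r*p^2/b) x)).div_const (60*π)
    refine h.congr_deriv ?_
    rw [hg x, hax, if_pos hx.2]
    simp only [blk']
    field_simp
    rw [hadef, hbdef]
    ring
  have hIcc : ∫ x in (0:ℝ)..p, g x * Real.cos (r*x) = F p - F 0 :=
    intervalIntegral.integral_eq_sub_of_hasDerivAt hF (hint.intervalIntegrable)
  have hzero : ∀ x ∉ Set.Icc (-p) p, g x * Real.cos (r*x) = 0 := by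
    intro x hx
    rw [hg x, if_neg (by rwa [abs_le, ← Set.mem_Icc]), zero_mul]
  have heven : ∀ x : ℝ, g (-x) * Real.cos (r*(-x)) = g x * Real.cos (r*x) := by
    intro x
    rw [hg (-x), hg x]
    simp [abs_neg, mul_neg, neg_div, Real.cos_neg]
  have hline : ∫ x : ℝ, g x * Real.cos (r*x) = 2 * (F p - F 0) := by
    rw [← setIntegral_eq_integral_of_forall_compl_eq_zero hzero,
      MeasureTheory.integral_Icc_eq_integral_Ioc,
      ← intervalIntegral.integral_of_le (by linarith : -p ≤ p),
      ← intervalIntegral.integral_add_adjacent_intervals (b := 0)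
        hint.intervalIntegrable hint.intervalIntegrable]
    have hflip : ∫ x in (-p)..(0:ℝ), g x * Real.cos (r*x) = ∫ x in (0:ℝ)..p, g x * Real.cos (r*x) := by
      have h := intervalIntegral.integral_comp_neg (a := (0:ℝ)) (b := p) (fun x => g x * Real.cos (r*x))
      simp only [heven, neg_zero] at h
      exact h.symm
    rw [hflip, hIcc]; ring
  rw [hline, hFdef]
  have hpp : ∀ k : ℝ, k*p/p = k := fun k => by field_simp
  have h3c : Real.cos (3*π) = -1 := by
    rw [show (3:ℝ)*π = 2*π+π by ring, Real.cos_add]; simp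
  have h3s : Real.sin (3*π) = 0 := by
    rw [show (3:ℝ)*π = 2*π+π by ring, Real.sin_add]; simp
  have hc : Real.cos (r*p) = 2*Real.cos (p*r/2)^2 - 1 := by
    rw [show r*p = 2*(p*r/2) by ring, Real.cos_two_mul]
  have hab : (9*π^4 - 10*p^2*π^2*r^2 + p^4*r^4) = a * b := by rw [hadef, hbdef]; ring
  simp only [blk, hpp, mul_zero, zero_div, Real.sin_zero, Real.cos_zero, Real.sin_pi,
    Real.cos_pi, h3c, h3s, div_self hp', hab, hc]
  field_simp
  ring

theorem stmt_5 (p : ℝ) (hp : 0 < p) (g : ℝ → ℝ)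
    (hg : ∀ x : ℝ, g x = if |x| ≤ p then
      (54*π*(1 - |x|/p) * Real.cos (π*x/p) + 6*π*(1 - |x|/p) * Real.cos (3*π*x/p)
        + 27 * Real.sin (π*|x|/p) + 11 * Real.sin (3*π*|x|/p)) / (60*π)
      else 0) :
    (∀ r : ℝ, p^2 * r^2 ≠ π^2 → p^2 * r^2 ≠ 9*π^2 →
      ∫ x : ℝ, (g x : ℂ) * Complex.exp (Complex.I * r * x)
        = ((2304 * p * π^6 * Real.cos (p*r/2)^2
            / (5 * (9*π^4 - 10*p^2*π^2*r^2 + p^4*r^4)^2) : ℝ) : ℂ)) ∧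
    (∀ r : ℝ, 0 ≤ (∫ x : ℝ, (g x : ℂ) * Complex.exp (Complex.I * r * x)).re) := by
  have hπ := Real.pi_pos
  have hπ' := Real.pi_ne_zero
  have hp' := hp.ne'
  -- sin integral is zero
  have hsin : ∀ r : ℝ, ∫ x : ℝ, g x * Real.sin (r*x) = 0 := by
    intro r
    have hodd : ∀ x : ℝ, g (-x) * Real.sin (r*(-x)) = -(g x * Real.sin (r*x)) := by
      intro x
      rw [hg (-x), hg x]
      simp [abs_neg, mul_neg, neg_div, Real.cos_neg, Real.sin_neg]
    have h := integral_neg_eq_self (fun x => g x * Real.sin (r*x)) (volume : Measure ℝ)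
    simp only [hodd, integral_neg] at h
    linarith
  -- complex integral reduces to the cosine integral
  have hsplit : ∀ r : ℝ, ∫ x : ℝ, (g x : ℂ) * Complex.exp (Complex.I * r * x)
      = ((∫ x : ℝ, g x * Real.cos (r*x) : ℝ) : ℂ) := by
    intro r
    have hre : Integrable (fun x => g x * Real.cos (r*x)) :=
      integ_aux p hp g hg (fun x => Real.cos (r*x)) (by fun_prop)
    have him : Integrable (fun x => g x * Real.sin (r*x)) :=
      integ_aux p hp g hg (fun x => Real.sin (r*x)) (by fun_prop)
    have heq : ∀ x : ℝ, (g x : ℂ) * Complex.exp (Complex.I * r * x)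
        = ((g x * Real.cos (r*x) : ℝ) : ℂ) + ((g x * Real.sin (r*x) : ℝ) : ℂ) * Complex.I := by
      intro x
      rw [show Complex.I * (r:ℂ) * (x:ℂ) = ((r*x : ℝ) : ℂ) * Complex.I by push_cast; ring,
        Complex.exp_mul_I, ← Complex.ofReal_cos, ← Complex.ofReal_sin]
      push_cast; ring
    have hre2 : Integrable (fun x : ℝ => ((g x * Real.cos (r*x) : ℝ) : ℂ)) := hre.ofReal
    have him2 : Integrable (fun x : ℝ => ((g x * Real.sin (r*x) : ℝ) : ℂ) * Complex.I) :=
      him.ofReal.mul_const Complex.I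
    simp only [heq]
    have e1 : ∫ a : ℝ, ((g a * Real.cos (r*a) : ℝ) : ℂ)
        = ((∫ a : ℝ, g a * Real.cos (r*a) : ℝ) : ℂ) := integral_ofReal
    have e2 : ∫ a : ℝ, ((g a * Real.sin (r*a) : ℝ) : ℂ)
        = ((∫ a : ℝ, g a * Real.sin (r*a) : ℝ) : ℂ) := integral_ofReal
    rw [integral_add hre2 him2, integral_mul_const, e1, e2, hsin r,
      Complex.ofReal_zero, zero_mul, add_zero]
  -- nonnegativity of cosine integral, first on good r, then everywhere by continuity
  have hgood : ∀ r : ℝ, p^2 * r^2 ≠ π^2 → p^2 * r^2 ≠ 9*π^2 →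
      0 ≤ ∫ x : ℝ, g x * Real.cos (r*x) := by
    intro r h1 h2
    rw [key p hp g hg r (integ_aux p hp g hg _ (by fun_prop)) h1 h2]
    apply div_nonneg
    · positivity
    · positivity
  have hcont : Continuous (fun r : ℝ => ∫ x : ℝ, g x * Real.cos (r*x)) := by
    have hgi : Integrable g := by
      simpa using integ_aux p hp g hg (fun _ => 1) continuous_const
    apply continuous_of_dominated (bound := fun x => |g x|)
    · intro r
      exact (integ_aux p hp g hg (fun x => Real.cos (r*x)) (by fun_prop)).aestronglyMeasurable
    · intro r
      filter_upwards with x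
      rw [norm_mul]
      calc ‖g x‖ * ‖Real.cos (r*x)‖ ≤ ‖g x‖ * 1 := by
            apply mul_le_mul_of_nonneg_left _ (norm_nonneg _)
            rw [Real.norm_eq_abs]
            exact Real.abs_cos_le_one _
        _ = |g x| := by rw [mul_one, Real.norm_eq_abs]
    · exact hgi.abs
    · filter_upwards with x
      fun_prop
  have hnn : ∀ r : ℝ, 0 ≤ ∫ x : ℝ, g x * Real.cos (r*x) := by
    intro r
    by_cases hr : p^2 * r^2 ≠ π^2 ∧ p^2 * r^2 ≠ 9*π^2
    · exact hgood r hr.1 hr.2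
    · -- r in the bad (countable) set: use continuity and density
      set S : Set ℝ := {s : ℝ | p^2 * s^2 = π^2 ∨ p^2 * s^2 = 9*π^2} with hSdef
      have hSsub : S ⊆ {π/p, -(π/p), 3*π/p, -(3*π/p)} := by
        intro s hs
        have key2 : ∀ c : ℝ, p^2 * s^2 = c^2 → s = c/p ∨ s = -(c/p) := by
          intro c hc
          have h' : (p*s)^2 = c^2 := by rw [mul_pow]; exact hc
          rcases sq_eq_sq_iff_eq_or_eq_neg.mp h' with h | h
          · left; field_simp; linear_combination h
          · right; field_simp; linear_combination h
        simp only [Set.mem_insert_iff, Set.mem_singleton_iff]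
        rcases hs with h | h
        · rcases key2 π h with h' | h' <;> tauto
        · rcases key2 (3*π) (by rw [h]; ring) with h' | h' <;> tauto
      have hScount : S.Countable := (Set.toFinite _).countable.mono hSsub
      have hdense : Dense Sᶜ := hScount.dense_compl ℝ
      have hne : (nhdsWithin r Sᶜ).NeBot := mem_closure_iff_nhdsWithin_neBot.mp (hdense r)
      refine ge_of_tendsto (hcont.continuousAt.continuousWithinAt (s := Sᶜ)) ?_
      filter_upwards [self_mem_nhdsWithin] with s hs
      rw [Set.mem_compl_iff, hSdef, Set.mem_setOf_eq] at hs
      push_neg at hs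
      exact hgood s hs.1 hs.2
  constructor
  · intro r h1 h2
    rw [hsplit r, key p hp g hg r (integ_aux p hp g hg _ (by fun_prop)) h1 h2]
  · intro r
    rw [hsplit r, Complex.ofReal_re]
    exact hnn r
end

section
/- Let p > 0 and let f : ℝ → ℝ be defined by f(x) = cos(πx/p) for |x| ≤ p/2 and f(x) = 0 for |x| > p/2. Then the self-convolution (f ⋆ f)(x) = ∫_ℝ f(t) f(x - t) dt satisfies: (f ⋆ f)(x) = (p/2)·((1 - |x|/p)·cos(πx/p) + (1/π)·sin(π|x|/p)) for |x| ≤ p, and (f ⋆ f)(x) = 0 for |x| ≥ p. -/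
open MeasureTheory Real

theorem stmt_6 (p : ℝ) (hp : 0 < p) (f : ℝ → ℝ)
    (hf : ∀ x : ℝ, f x = if |x| ≤ p/2 then Real.cos (π * x / p) else 0) :
    (∀ x : ℝ, |x| ≤ p → ∫ t : ℝ, f t * f (x - t)
        = (p/2) * ((1 - |x|/p) * Real.cos (π*x/p) + (1/π) * Real.sin (π*|x|/p))) ∧
    (∀ x : ℝ, p ≤ |x| → ∫ t : ℝ, f t * f (x - t) = 0) := by
  have hπ := Real.pi_pos
  have hp' : p ≠ 0 := ne_of_gt hp
  set c : ℝ := π / p with hc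
  have hc0 : 0 < c := div_pos hπ hp
  have hcp : c * p = π := by rw [hc]; field_simp
  have harg : ∀ y : ℝ, π * y / p = c * y := fun y => by rw [hc]; ring
  constructor
  · intro x hx
    set l : ℝ := max (-(p/2)) (x - p/2) with hl
    set u : ℝ := min (p/2) (x + p/2) with hu
    have habs := abs_le.mp hx
    have hlu : l ≤ u := by
      rw [hl, hu]
      apply max_le <;> apply le_min <;> linarith
    -- the integrand equals the indicator of [l,u] of the cosine product
    have hind : ∀ t : ℝ, f t * f (x - t)
        = (Set.Icc l u).indicator (fun t => Real.cos (c*t) * Real.cos (c*(x - t))) t := by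
      intro t
      have hmem : t ∈ Set.Icc l u ↔ (|t| ≤ p/2 ∧ |x - t| ≤ p/2) := by
        simp only [Set.mem_Icc, hl, hu, max_le_iff, le_min_iff, abs_le]
        constructor
        · rintro ⟨⟨a, b⟩, d, e⟩
          refine ⟨⟨?_, ?_⟩, ?_, ?_⟩ <;> linarith
        · rintro ⟨⟨a, b⟩, d, e⟩
          refine ⟨⟨?_, ?_⟩, ?_, ?_⟩ <;> linarith
      rw [hf, hf, Set.indicator_apply]
      by_cases h1 : |t| ≤ p/2 <;> by_cases h2 : |x - t| ≤ p/2 <;>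
        simp [h1, h2, hmem, harg]
    have step1 : (∫ t : ℝ, f t * f (x - t))
        = ∫ t in Set.Icc l u, Real.cos (c*t) * Real.cos (c*(x - t)) := by
      rw [MeasureTheory.integral_congr_ae (Filter.Eventually.of_forall hind),
        MeasureTheory.integral_indicator measurableSet_Icc]
    have step2 : (∫ t in Set.Icc l u, Real.cos (c*t) * Real.cos (c*(x - t)))
        = ∫ t in l..u, Real.cos (c*t) * Real.cos (c*(x - t)) := by
      rw [MeasureTheory.integral_Icc_eq_integral_Ioc, ← intervalIntegral.integral_of_le hlu]
    -- FTC
    have hderiv : ∀ t : ℝ, HasDerivAt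
        (fun t : ℝ => Real.cos (c*x)/2 * t + Real.sin (c*(2*t - x))/(4*c))
        (Real.cos (c*t) * Real.cos (c*(x - t))) t := by
      intro t
      have h1 : HasDerivAt (fun t : ℝ => Real.cos (c*x)/2 * t) (Real.cos (c*x)/2 * 1) t :=
        (hasDerivAt_id t).const_mul _
      have hi : HasDerivAt (fun t : ℝ => c*(2*t - x)) (c*(2*1)) t :=
        (((hasDerivAt_id t).const_mul 2).sub_const x).const_mul c
      have h2 : HasDerivAt (fun t : ℝ => Real.sin (c*(2*t - x)))
          (Real.cos (c*(2*t - x)) * (c*(2*1))) t :=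
        (Real.hasDerivAt_sin _).comp t hi
      have h3 := h1.add (h2.div_const (4*c))
      refine h3.congr_deriv ?_
      have e1 : c*x = c*t + c*(x - t) := by ring
      have e2 : c*(2*t - x) = c*t - c*(x - t) := by ring
      rw [e1, e2, Real.cos_add, Real.cos_sub]
      field_simp
      ring
    have hcont : Continuous fun t : ℝ => Real.cos (c*t) * Real.cos (c*(x - t)) :=
      (Real.continuous_cos.comp (continuous_const.mul continuous_id)).mul
        (Real.continuous_cos.comp (continuous_const.mul (continuous_const.sub continuous_id)))
    have step3 : (∫ t in l..u, Real.cos (c*t) * Real.cos (c*(x - t)))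
        = (Real.cos (c*x)/2 * u + Real.sin (c*(2*u - x))/(4*c))
          - (Real.cos (c*x)/2 * l + Real.sin (c*(2*l - x))/(4*c)) :=
      intervalIntegral.integral_eq_sub_of_hasDerivAt (fun t _ => hderiv t)
        (hcont.intervalIntegrable _ _)
    rw [step1, step2, step3, harg, harg]
    rcases le_or_gt 0 x with hx0 | hx0
    · have hlx : l = x - p/2 := max_eq_right (by linarith)
      have hux : u = p/2 := min_eq_left (by linarith)
      have hax : |x| = x := abs_of_nonneg hx0
      rw [hlx, hux, hax]
      have e1 : c*(2*(p/2) - x) = π - c*x := by rw [← hcp]; ring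
      have e2 : c*(2*(x - p/2) - x) = c*x - π := by rw [← hcp]; ring
      rw [e1, e2, Real.sin_pi_sub, Real.sin_sub_pi, hc]
      field_simp
      ring
    · have hlx : l = -(p/2) := max_eq_left (by linarith)
      have hux : u = x + p/2 := min_eq_right (by linarith)
      have hax : |x| = -x := abs_of_neg hx0
      rw [hlx, hux, hax]
      have e1 : c*(2*(x + p/2) - x) = π - (-(c*x)) := by rw [← hcp]; ring
      have e2 : c*(2*(-(p/2)) - x) = (-(c*x)) - π := by rw [← hcp]; ring
      rw [e1, e2, Real.sin_pi_sub, Real.sin_sub_pi, Real.sin_neg,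
        show c * -x = -(c*x) by ring, Real.sin_neg, hc]
      field_simp
      ring
  · intro x hx
    have hzero : ∀ t : ℝ, f t * f (x - t) = 0 := by
      intro t
      rw [hf, hf]
      by_cases h1 : |t| ≤ p/2
      · by_cases h2 : |x - t| ≤ p/2
        · have habs : |x| ≤ |t| + |x - t| := by
            have : x = t + (x - t) := by ring
            calc |x| = |t + (x - t)| := by rw [← this]
            _ ≤ _ := abs_add_le _ _
          have ht : |t| = p/2 := le_antisymm h1 (by linarith)
          rcases (abs_eq (by positivity : (0:ℝ) ≤ p/2)).mp ht with h | h
          · subst h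
            rw [if_pos h1, show π * (p/2) / p = π/2 by field_simp,
              Real.cos_pi_div_two, zero_mul]
          · subst h
            rw [if_pos h1, show π * (-(p/2)) / p = -(π/2) by field_simp,
              Real.cos_neg, Real.cos_pi_div_two, zero_mul]
        · rw [if_neg h2, mul_zero]
      · rw [if_neg h1, zero_mul]
    simp [hzero]
end

section
/- For ν ∈ ℂ define K_ν(y) = (1/2)·∫_0^∞ e^{-y(t + 1/t)/2} t^ν dt/t for y > 0. Then for every s ∈ ℂ with Re s > |Re ν|, ∫_0^∞ K_ν(y) y^s dy/y = 2^{s-2}·Γ((s+ν)/2)·Γ((s-ν)/2). -/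
open MeasureTheory Real

/-- The K-Bessel function of order `ν`, defined for `y > 0` by
`K_ν(y) = (1/2)∫_0^∞ e^{-y(t+1/t)/2} t^ν dt/t`. -/
noncomputable def besselK (ν : ℂ) (y : ℝ) : ℂ :=
  (1/2) * ∫ t in Set.Ioi (0:ℝ), (Real.exp (-(y * (t + 1/t) / 2)) : ℂ) * (t : ℂ) ^ (ν - 1)

namespace BesselAux

open Set


lemma norm_aux (e : ℝ) {y : ℝ} (hy : 0 < y) (c : ℂ) :
    ‖(Real.exp e : ℂ) * (y:ℂ) ^ c‖ = Real.exp e * y ^ c.re := by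
  rw [norm_mul, Complex.norm_real, Real.norm_eq_abs, abs_of_pos (Real.exp_pos e),
    Complex.norm_cpow_eq_rpow_re_of_pos hy]

lemma meas_cpow (c : ℂ) :
    AEStronglyMeasurable (fun y : ℝ => (y:ℂ) ^ c) (volume.restrict (Ioi 0)) := by
  refine ContinuousOn.aestronglyMeasurable (fun y hy => ?_) measurableSet_Ioi
  exact (Complex.continuousAt_ofReal_cpow_const y c (Or.inr (ne_of_gt hy))).continuousWithinAt

lemma gauss_integrable' {c : ℂ} (hc : 0 < c.re) {r : ℝ} (hr : 0 < r) :
    IntegrableOn (fun y : ℝ => (Real.exp (-(r * y ^ 2)) : ℂ) * (y:ℂ) ^ (c - 1)) (Ioi 0) := by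
  have h0 : IntegrableOn (fun y : ℝ => y ^ (c.re - 1) * Real.exp (-r * y ^ 2)) (Ioi 0) :=
    integrableOn_rpow_mul_exp_neg_mul_sq hr (by linarith)
  refine Integrable.mono' h0 ?_ ?_
  · exact ((Complex.continuous_ofReal.comp
      (Real.continuous_exp.comp (by continuity))).aestronglyMeasurable.restrict).mul
      (meas_cpow (c - 1))
  · filter_upwards [ae_restrict_mem measurableSet_Ioi] with y hy
    rw [norm_aux _ hy, Complex.sub_re, Complex.one_re, neg_mul]
    exact le_of_eq (mul_comm _ _)

lemma gauss_value' {c : ℂ} (hc : 0 < c.re) {r : ℝ} (hr : 0 < r) :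
    ∫ y in Ioi (0:ℝ), (Real.exp (-(r * y ^ 2)) : ℂ) * (y:ℂ) ^ (c - 1)
      = (r:ℂ) ^ (-(c/2)) * Complex.Gamma (c/2) / 2 := by
  have hre2 : (c/2).re = c.re / 2 := by
    simp [Complex.div_re, Complex.normSq]
  set g : ℝ → ℂ := fun x => (Real.exp (-x) : ℂ) * (x:ℂ) ^ (c/2 - 1) with hg
  have hG : Complex.Gamma (c/2) = ∫ x in Ioi (0:ℝ), g x := by
    rw [Complex.Gamma_eq_integral (by rw [hre2]; linarith)]
    rfl
  have h1 : (∫ x in Ioi (0:ℝ), g (r * x)) = (r:ℝ)⁻¹ • ∫ x in Ioi (0:ℝ), g x := by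
    simpa using integral_comp_mul_left_Ioi g 0 hr
  have h2 := integral_comp_rpow_Ioi_of_pos (g := fun x => g (r * x)) two_pos
  have key : ∀ y ∈ Ioi (0:ℝ), ((2:ℝ) * y ^ ((2:ℝ) - 1)) • g (r * y ^ (2:ℝ))
      = ((2:ℂ) * (r:ℂ) ^ (c/2 - 1)) * ((Real.exp (-(r * y ^ 2)) : ℂ) * (y:ℂ) ^ (c - 1)) := by
    intro y hy
    have hy0 : (0:ℝ) < y := hy
    have hy2 : y ^ (2:ℝ) = y ^ 2 := by
      rw [show (2:ℝ) = ((2:ℕ):ℝ) by norm_num, Real.rpow_natCast]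
    have hyc : (y:ℂ) ≠ 0 := Complex.ofReal_ne_zero.mpr hy0.ne'
    have e1 : ((r * y ^ 2 : ℝ) : ℂ) ^ (c/2 - 1)
        = (r:ℂ) ^ (c/2 - 1) * ((y ^ 2 : ℝ) : ℂ) ^ (c/2 - 1) := by
      rw [Complex.ofReal_mul]
      exact Complex.mul_cpow_ofReal_nonneg hr.le (sq_nonneg y) _
    have e2 : ((y ^ 2 : ℝ) : ℂ) ^ (c/2 - 1) = (y:ℂ) ^ (c - 2) := by
      rw [← hy2, ← Complex.cpow_mul_ofReal_nonneg hy0.le]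
      norm_num
      ring_nf
    have e3 : (y:ℂ) * (y:ℂ) ^ (c - 2) = (y:ℂ) ^ (c - 1) := by
      rw [show c - 1 = (c - 2) + 1 by ring, Complex.cpow_add _ _ hyc, Complex.cpow_one]
      ring
    rw [hg]
    simp only [hy2]
    rw [show (2:ℝ) - 1 = 1 by norm_num, Real.rpow_one, e1, e2, Complex.real_smul,
      Complex.ofReal_mul, ← e3]
    push_cast
    ring
  have h3 : ((2:ℂ) * (r:ℂ) ^ (c/2 - 1)) *
      (∫ y in Ioi (0:ℝ), (Real.exp (-(r * y ^ 2)) : ℂ) * (y:ℂ) ^ (c - 1))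
      = (r:ℝ)⁻¹ • Complex.Gamma (c/2) := by
    rw [← MeasureTheory.integral_const_mul, ← setIntegral_congr_fun measurableSet_Ioi key, h2, h1, ← hG]
  have hrc : (r:ℂ) ≠ 0 := Complex.ofReal_ne_zero.mpr hr.ne'
  have hp : (r:ℂ) ^ (c/2 - 1) ≠ 0 := by
    simp [Complex.cpow_eq_zero_iff, hrc]
  have hinv : (r:ℂ) ^ (-(c/2)) = (r:ℂ)⁻¹ * ((r:ℂ) ^ (c/2 - 1))⁻¹ := by
    rw [show -(c/2) = (-1) + -(c/2 - 1) by ring, Complex.cpow_add _ _ hrc,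
      Complex.cpow_neg_one, Complex.cpow_neg]
  rw [Complex.real_smul, Complex.ofReal_inv] at h3
  rw [hinv]
  apply mul_left_cancel₀ (show (2:ℂ) * (r:ℂ) ^ (c/2 - 1) ≠ 0 from mul_ne_zero two_ne_zero hp)
  rw [h3]
  rw [show (2:ℂ) * (r:ℂ) ^ (c/2 - 1) * ((↑r)⁻¹ * ((r:ℂ) ^ (c/2 - 1))⁻¹ * Complex.Gamma (c/2) / 2)
      = (↑r)⁻¹ * Complex.Gamma (c/2) * ((r:ℂ) ^ (c/2 - 1) * ((r:ℂ) ^ (c/2 - 1))⁻¹) by ring,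
    mul_inv_cancel₀ hp, mul_one]


lemma gauss_integrable {c : ℂ} (hc : 0 < c.re) {d : ℝ} (hd : 0 < d) :
    IntegrableOn (fun y : ℝ => (Real.exp (-(y ^ 2 / d)) : ℂ) * (y:ℂ) ^ (c - 1)) (Ioi 0) := by
  refine (gauss_integrable' hc (inv_pos.mpr hd)).congr_fun (fun x hx => ?_) measurableSet_Ioi
  dsimp only
  rw [show d⁻¹ * x ^ 2 = x ^ 2 / d by field_simp]

lemma gauss_value {c : ℂ} (hc : 0 < c.re) {d : ℝ} (hd : 0 < d) :
    ∫ y in Ioi (0:ℝ), (Real.exp (-(y ^ 2 / d)) : ℂ) * (y:ℂ) ^ (c - 1)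
      = (d:ℂ) ^ (c/2) * Complex.Gamma (c/2) / 2 := by
  have h := gauss_value' hc (inv_pos.mpr hd)
  have hargpi : ((d:ℝ):ℂ).arg ≠ π := by
    rw [Complex.arg_ofReal_of_nonneg hd.le]
    exact Ne.symm Real.pi_ne_zero
  have harg : ((d:ℂ))⁻¹ ^ (-(c/2)) = (d:ℂ) ^ (c/2) := by
    rw [Complex.inv_cpow _ _ hargpi, Complex.cpow_neg, inv_inv]
  rw [show (∫ y in Ioi (0:ℝ), (Real.exp (-(y ^ 2 / d)) : ℂ) * (y:ℂ) ^ (c - 1))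
      = ∫ y in Ioi (0:ℝ), (Real.exp (-(d⁻¹ * y ^ 2)) : ℂ) * (y:ℂ) ^ (c - 1) by
    refine setIntegral_congr_fun measurableSet_Ioi (fun x hx => ?_)
    rw [show d⁻¹ * x ^ 2 = x ^ 2 / d by field_simp], h, Complex.ofReal_inv, harg]

lemma gauss_value_real {cr : ℝ} (hc : 0 < cr) {d : ℝ} (hd : 0 < d) :
    ∫ y in Ioi (0:ℝ), Real.exp (-(y ^ 2 / d)) * y ^ (cr - 1)
      = d ^ (cr/2) * Real.Gamma (cr/2) / 2 := by
  have h := integral_rpow_mul_exp_neg_mul_rpow (p := 2) (q := cr - 1) (b := d⁻¹) two_pos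
    (by linarith) (inv_pos.mpr hd)
  rw [show (∫ y in Ioi (0:ℝ), Real.exp (-(y ^ 2 / d)) * y ^ (cr - 1))
      = ∫ x in Ioi (0:ℝ), x ^ (cr - 1) * Real.exp (-d⁻¹ * x ^ (2:ℝ)) by
    refine setIntegral_congr_fun measurableSet_Ioi (fun x hx => ?_)
    rw [show x ^ (2:ℝ) = x ^ 2 by
      rw [show (2:ℝ) = ((2:ℕ):ℝ) by norm_num, Real.rpow_natCast]]
    rw [show -d⁻¹ * x ^ 2 = -(x ^ 2 / d) by field_simp]
    ring, h]
  rw [show cr - 1 + 1 = cr by ring, Real.inv_rpow hd.le, ← Real.rpow_neg hd.le]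
  ring_nf


lemma step1 (ν s : ℂ) {y : ℝ} (hy : 0 < y) :
    besselK ν y * (y:ℂ) ^ (s - 1)
      = (2:ℂ) ^ (ν - 1) * ∫ u in Ioi (0:ℝ),
          (Real.exp (-u) : ℂ) * (u:ℂ) ^ (ν - 1) *
            ((Real.exp (-(y ^ 2 / (4 * u))) : ℂ) * (y:ℂ) ^ (s - ν - 1)) := by
  have hyc : (y:ℂ) ≠ 0 := Complex.ofReal_ne_zero.mpr hy.ne'
  have hb : (0:ℝ) < 2 / y := by positivity
  set g : ℝ → ℂ := fun t => (Real.exp (-(y * (t + 1/t) / 2)) : ℂ) * (t:ℂ) ^ (ν - 1) with hgdef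
  have h1 : (∫ x in Ioi (0:ℝ), g ((2/y) * x)) = (2/y)⁻¹ • ∫ x in Ioi (0:ℝ), g x := by
    simpa using integral_comp_mul_left_Ioi g 0 hb
  have h2 : (∫ t in Ioi (0:ℝ), g t) = (2/y) • ∫ u in Ioi (0:ℝ), g ((2/y) * u) := by
    rw [h1, smul_smul, mul_inv_cancel₀ hb.ne', one_smul]
  have key : ∀ u ∈ Ioi (0:ℝ), g ((2/y) * u)
      = ((2/y : ℝ):ℂ) ^ (ν - 1) *
        ((Real.exp (-u) : ℂ) * (u:ℂ) ^ (ν - 1) * (Real.exp (-(y ^ 2 / (4 * u))) : ℂ)) := by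
    intro u hu
    have hu0 : (0:ℝ) < u := hu
    have hexp : y * ((2/y) * u + 1/((2/y) * u)) / 2 = u + y ^ 2 / (4 * u) := by
      field_simp
      ring
    have hsplit : Real.exp (-(u + y ^ 2 / (4 * u)))
        = Real.exp (-u) * Real.exp (-(y ^ 2 / (4 * u))) := by
      rw [← Real.exp_add]
      ring_nf
    have hcp : (((2/y) * u : ℝ) : ℂ) ^ (ν - 1) = ((2/y:ℝ):ℂ) ^ (ν - 1) * (u:ℂ) ^ (ν - 1) := by
      rw [Complex.ofReal_mul]
      exact Complex.mul_cpow_ofReal_nonneg hb.le hu0.le _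
    rw [hgdef]
    simp only
    rw [hexp, hsplit, hcp]
    push_cast
    ring
  have h3 : (∫ u in Ioi (0:ℝ), g ((2/y) * u))
      = ((2/y:ℝ):ℂ) ^ (ν - 1) * ∫ u in Ioi (0:ℝ),
          (Real.exp (-u) : ℂ) * (u:ℂ) ^ (ν - 1) * (Real.exp (-(y ^ 2 / (4 * u))) : ℂ) := by
    rw [setIntegral_congr_fun measurableSet_Ioi key, MeasureTheory.integral_const_mul]
  have h4 : (∫ u in Ioi (0:ℝ), (Real.exp (-u) : ℂ) * (u:ℂ) ^ (ν - 1) *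
        ((Real.exp (-(y ^ 2 / (4 * u))) : ℂ) * (y:ℂ) ^ (s - ν - 1)))
      = (∫ u in Ioi (0:ℝ), (Real.exp (-u) : ℂ) * (u:ℂ) ^ (ν - 1) *
          (Real.exp (-(y ^ 2 / (4 * u))) : ℂ)) * (y:ℂ) ^ (s - ν - 1) := by
    rw [← MeasureTheory.integral_mul_const]
    refine setIntegral_congr_fun measurableSet_Ioi (fun u hu => ?_)
    ring
  have hargpi : ((y:ℝ):ℂ).arg ≠ π := by
    rw [Complex.arg_ofReal_of_nonneg hy.le]
    exact Ne.symm Real.pi_ne_zero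
  have hpow : ((2/y:ℝ):ℂ) ^ (ν - 1) = (2:ℂ) ^ (ν - 1) * (((y:ℂ)) ^ (ν - 1))⁻¹ := by
    have h5 := Complex.mul_cpow_ofReal_nonneg (by norm_num : (0:ℝ) ≤ 2)
      (inv_nonneg.mpr hy.le) (ν - 1)
    rw [show ((2/y:ℝ):ℂ) = (((2:ℝ):ℂ) * ((y⁻¹:ℝ):ℂ) : ℂ) by push_cast; ring, h5,
      Complex.ofReal_inv, Complex.inv_cpow _ _ hargpi]
    norm_num
  have hysplit : (y:ℂ) ^ (s - 1) = (y:ℂ) ^ (s - ν - 1) * (y:ℂ) ^ (ν - 1) * (y:ℂ) := by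
    rw [show s - 1 = (s - ν - 1) + (ν - 1) + 1 by ring, Complex.cpow_add _ _ hyc,
      Complex.cpow_add _ _ hyc, Complex.cpow_one]
  have hpne : ((y:ℂ)) ^ (ν - 1) ≠ 0 := by
    simp [Complex.cpow_eq_zero_iff, hyc]
  rw [besselK, h4]
  rw [show (∫ t in Set.Ioi (0:ℝ), (Real.exp (-(y * (t + 1/t) / 2)) : ℂ) * (t : ℂ) ^ (ν - 1))
      = ∫ t in Ioi (0:ℝ), g t from rfl, h2, h3, hpow, hysplit, Complex.real_smul]
  push_cast
  field_simp
  ring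

lemma re_div_two (z : ℂ) : (z/2).re = z.re/2 := by
  simp [Complex.div_re, Complex.normSq]

lemma F_int (ν s : ℂ) (hs : |ν.re| < s.re) :
    Integrable (Function.uncurry fun y u : ℝ =>
      (Real.exp (-u) : ℂ) * (u:ℂ) ^ (ν - 1) *
        ((Real.exp (-(y ^ 2 / (4 * u))) : ℂ) * (y:ℂ) ^ (s - ν - 1)))
      ((volume.restrict (Ioi 0)).prod (volume.restrict (Ioi 0))) := by
  obtain ⟨hs1, hs2⟩ := abs_lt.mp hs
  have hσ : 0 < (s - ν).re := by
    rw [Complex.sub_re]; linarith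
  have ht : 0 < (s.re + ν.re)/2 := by linarith
  have hmeas : AEStronglyMeasurable (Function.uncurry fun y u : ℝ =>
      (Real.exp (-u) : ℂ) * (u:ℂ) ^ (ν - 1) *
        ((Real.exp (-(y ^ 2 / (4 * u))) : ℂ) * (y:ℂ) ^ (s - ν - 1)))
      ((volume.restrict (Ioi 0)).prod (volume.restrict (Ioi 0))) := by
    rw [Measure.prod_restrict]
    refine ContinuousOn.aestronglyMeasurable ?_ (measurableSet_Ioi.prod measurableSet_Ioi)
    show ContinuousOn (fun p : ℝ × ℝ =>
      (Real.exp (-p.2) : ℂ) * (p.2:ℂ) ^ (ν - 1) *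
        ((Real.exp (-(p.1 ^ 2 / (4 * p.2))) : ℂ) * (p.1:ℂ) ^ (s - ν - 1))) _
    refine ContinuousOn.mul (ContinuousOn.mul ?_ ?_) (ContinuousOn.mul ?_ ?_)
    · exact (Complex.continuous_ofReal.comp (Real.continuous_exp.comp
        continuous_snd.neg)).continuousOn
    · intro p hp
      exact ((Complex.continuousAt_ofReal_cpow_const p.2 (ν - 1)
        (Or.inr (ne_of_gt (mem_prod.mp hp).2))).comp
        continuous_snd.continuousAt).continuousWithinAt
    · refine Complex.continuous_ofReal.comp_continuousOn
        (Real.continuous_exp.comp_continuousOn (ContinuousOn.neg (ContinuousOn.div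
        (continuous_fst.pow 2).continuousOn (continuous_const.mul
          continuous_snd).continuousOn ?_)))
      intro p hp
      have : (0:ℝ) < p.2 := (mem_prod.mp hp).2
      positivity
    · intro p hp
      exact ((Complex.continuousAt_ofReal_cpow_const p.1 (s - ν - 1)
        (Or.inr (ne_of_gt (mem_prod.mp hp).1))).comp
        continuous_fst.continuousAt).continuousWithinAt
  rw [MeasureTheory.integrable_prod_iff' hmeas]
  constructor
  · refine (ae_restrict_iff' measurableSet_Ioi).mpr (Filter.Eventually.of_forall
      fun u hu => ?_)
    have hu0 : (0:ℝ) < u := hu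
    exact (gauss_integrable hσ (show (0:ℝ) < 4 * u by positivity)).const_mul
      ((Real.exp (-u) : ℂ) * (u:ℂ) ^ (ν - 1))
  · refine Integrable.congr (((Real.GammaIntegral_convergent ht).const_mul
      ((4:ℝ) ^ ((s - ν).re/2) * Real.Gamma ((s - ν).re/2) / 2)) : Integrable _ _) ?_
    filter_upwards [ae_restrict_mem measurableSet_Ioi] with u hu
    have hu0 : (0:ℝ) < u := hu
    have h4u : (0:ℝ) < 4 * u := by positivity
    have hnorm : ∀ y ∈ Ioi (0:ℝ),
        ‖(Real.exp (-u) : ℂ) * (u:ℂ) ^ (ν - 1) *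
          ((Real.exp (-(y ^ 2 / (4 * u))) : ℂ) * (y:ℂ) ^ (s - ν - 1))‖
        = (Real.exp (-u) * u ^ (ν.re - 1)) *
          (Real.exp (-(y ^ 2 / (4 * u))) * y ^ ((s - ν).re - 1)) := by
      intro y hy
      rw [norm_mul, norm_aux _ hu0, norm_aux _ hy]
      simp [Complex.sub_re, Complex.one_re]
    calc (4:ℝ) ^ ((s - ν).re/2) * Real.Gamma ((s - ν).re/2) / 2 *
          (Real.exp (-u) * u ^ ((s.re + ν.re)/2 - 1))
        = (Real.exp (-u) * u ^ (ν.re - 1)) *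
            ((4 * u) ^ ((s - ν).re/2) * Real.Gamma ((s - ν).re/2) / 2) := by
          rw [Real.mul_rpow (by norm_num) hu0.le,
            show (s.re + ν.re)/2 - 1 = (ν.re - 1) + (s - ν).re/2 by
              rw [Complex.sub_re]; ring,
            Real.rpow_add hu0]
          ring
      _ = ∫ y in Ioi (0:ℝ), ‖(Real.exp (-u) : ℂ) * (u:ℂ) ^ (ν - 1) *
            ((Real.exp (-(y ^ 2 / (4 * u))) : ℂ) * (y:ℂ) ^ (s - ν - 1))‖ := by
          rw [show (∫ y in Ioi (0:ℝ), ‖(Real.exp (-u) : ℂ) * (u:ℂ) ^ (ν - 1) *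
              ((Real.exp (-(y ^ 2 / (4 * u))) : ℂ) * (y:ℂ) ^ (s - ν - 1))‖)
            = ∫ y in Ioi (0:ℝ), (Real.exp (-u) * u ^ (ν.re - 1)) *
              (Real.exp (-(y ^ 2 / (4 * u))) * y ^ ((s - ν).re - 1)) from
            setIntegral_congr_fun measurableSet_Ioi hnorm,
            MeasureTheory.integral_const_mul, gauss_value_real hσ h4u]

end BesselAux

open BesselAux in

theorem stmt_7 (ν s : ℂ) (hs : |ν.re| < s.re) :
    ∫ y in Set.Ioi (0:ℝ), besselK ν y * (y : ℂ) ^ (s - 1)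
      = (2:ℂ) ^ (s - 2) * Complex.Gamma ((s + ν)/2) * Complex.Gamma ((s - ν)/2) := by
  obtain ⟨hs1, hs2⟩ := abs_lt.mp hs
  have hσ : 0 < (s - ν).re := by rw [Complex.sub_re]; linarith
  have hb2 : 0 < ((s - ν)/2).re := by rw [re_div_two]; linarith
  have ha2 : 0 < ((s + ν)/2).re := by rw [re_div_two, Complex.add_re]; linarith
  rw [setIntegral_congr_fun measurableSet_Ioi (fun y hy => step1 ν s hy),
    MeasureTheory.integral_const_mul,
    MeasureTheory.integral_integral_swap (F_int ν s hs)]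
  have key : ∀ u ∈ Set.Ioi (0:ℝ),
      (∫ y in Set.Ioi (0:ℝ), (Real.exp (-u) : ℂ) * (u:ℂ) ^ (ν - 1) *
        ((Real.exp (-(y ^ 2 / (4 * u))) : ℂ) * (y:ℂ) ^ (s - ν - 1)))
      = (((4:ℝ):ℂ) ^ ((s - ν)/2) * (Complex.Gamma ((s - ν)/2) / 2)) *
          ((Real.exp (-u) : ℂ) * (u:ℂ) ^ ((s + ν)/2 - 1)) := by
    intro u hu
    have hu0 : (0:ℝ) < u := hu
    have huc : (u:ℂ) ≠ 0 := Complex.ofReal_ne_zero.mpr hu0.ne'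
    rw [MeasureTheory.integral_const_mul, gauss_value hσ (show (0:ℝ) < 4 * u by positivity)]
    rw [show ((4 * u : ℝ):ℂ) = ((4:ℝ):ℂ) * ((u:ℝ):ℂ) by push_cast; ring,
      Complex.mul_cpow_ofReal_nonneg (by norm_num) hu0.le,
      show (s + ν)/2 - 1 = (ν - 1) + (s - ν)/2 by ring,
      Complex.cpow_add _ _ huc]
    ring
  rw [setIntegral_congr_fun measurableSet_Ioi key, MeasureTheory.integral_const_mul]
  have hG : (∫ u in Set.Ioi (0:ℝ), (Real.exp (-u) : ℂ) * (u:ℂ) ^ ((s + ν)/2 - 1))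
      = Complex.Gamma ((s + ν)/2) := by
    rw [Complex.Gamma_eq_integral ha2]
    rfl
  rw [hG]
  have h4 : ((4:ℝ):ℂ) ^ ((s - ν)/2) = (2:ℂ) ^ (s - ν) := by
    have h24 := Complex.cpow_mul_ofReal_nonneg (show (0:ℝ) ≤ 2 by norm_num) 2 ((s - ν)/2)
    rw [show ((2:ℝ) ^ (2:ℝ) : ℝ) = 4 by
        rw [show (2:ℝ) = ((2:ℕ):ℝ) by norm_num, Real.rpow_natCast]; norm_num] at h24
    rw [← h24]
    norm_num
    rw [show (2:ℂ) * ((s - ν)/2) = s - ν by ring]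
  have h2s : (2:ℂ) ^ (ν - 1) * (2:ℂ) ^ (s - ν) = (2:ℂ) ^ (s - 2) * 2 := by
    rw [← Complex.cpow_add _ _ two_ne_zero,
      show ν - 1 + (s - ν) = (s - 2) + 1 by ring,
      Complex.cpow_add _ _ two_ne_zero, Complex.cpow_one]
  rw [h4]
  linear_combination (Complex.Gamma ((s - ν)/2) / 2 * Complex.Gamma ((s + ν)/2)) * h2s
end

section
/- Let n ≥ 2 be an integer, d > 0, and let s : ℝ → ℝ be continuously differentiable. Suppose x ∈ ℝⁿ satisfies Σ_j x_j = 0 and Σ_j x_j² = d, and x is a local extremum of the function y ↦ Σ_j s(y_j) restricted to the set {y ∈ ℝⁿ : Σ_j y_j = 0 and Σ_j y_j² = d}. Then there exist real constants c₁, c₂ such that s'(x_j) = c₁·x_j + c₂ for every j. Consequently, if for all real c₁, c₂ the set {t ∈ ℝ : s'(t) = c₁t + c₂} has at most three elements, then the coordinates x_1, ..., x_n assume at most three distinct values. -/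
theorem stmt_13 (n : ℕ) (hn : 2 ≤ n) (d : ℝ) (hd : 0 < d)
    (s : ℝ → ℝ) (hs : ContDiff ℝ 1 s)
    (x : Fin n → ℝ) (hx1 : ∑ j, x j = 0) (hx2 : ∑ j, (x j)^2 = d)
    (hext : IsLocalExtrOn (fun y : Fin n → ℝ => ∑ j, s (y j))
      {y : Fin n → ℝ | ∑ j, y j = 0 ∧ ∑ j, (y j)^2 = d} x) :
    (∃ c₁ c₂ : ℝ, ∀ j, deriv s (x j) = c₁ * x j + c₂) ∧
    ((∀ c₁ c₂ : ℝ, {t : ℝ | deriv s t = c₁ * t + c₂}.encard ≤ 3)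
      → (Set.range x).encard ≤ 3) := by
  -- set up the two constraint functions
  set f : Fin 2 → (Fin n → ℝ) → ℝ := ![fun y => ∑ j, y j, fun y => ∑ j, (y j)^2] with hf
  set pr : Fin n → (Fin n → ℝ) →L[ℝ] ℝ := fun j => ContinuousLinearMap.proj j with hpr
  set f' : Fin 2 → (Fin n → ℝ) →L[ℝ] ℝ :=
    ![∑ j, pr j, ∑ j, (2 * x j) • pr j] with hf'
  set φ' : (Fin n → ℝ) →L[ℝ] ℝ := ∑ j, (deriv s (x j)) • pr j with hφ'
  have hproj : ∀ j : Fin n, HasStrictFDerivAt (fun y : Fin n → ℝ => y j) (pr j) x :=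
    fun j => (pr j).hasStrictFDerivAt
  have hf0 : HasStrictFDerivAt (f 0) (f' 0) x := by
    simp only [hf, hf', Matrix.cons_val_zero]
    exact HasStrictFDerivAt.fun_sum (fun j _ => hproj j)
  have hf1 : HasStrictFDerivAt (f 1) (f' 1) x := by
    simp only [hf, hf', Matrix.cons_val_one, Matrix.head_cons, Matrix.cons_val_zero]
    refine HasStrictFDerivAt.fun_sum (fun j _ => ?_)
    have h : HasStrictDerivAt (fun t : ℝ => t ^ 2) (2 * x j) (x j) := by
      simpa using hasStrictDerivAt_pow 2 (x j)
    have := h.hasStrictFDerivAt.comp x (hproj j)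
    convert this using 1
    ext v
    simp [mul_comm]
  have hφ : HasStrictFDerivAt (fun y : Fin n → ℝ => ∑ j, s (y j)) φ' x := by
    rw [hφ']
    refine HasStrictFDerivAt.fun_sum (fun j _ => ?_)
    have h : HasStrictDerivAt s (deriv s (x j)) (x j) :=
      (hs.contDiffAt.hasStrictDerivAt one_ne_zero)
    have := h.hasStrictFDerivAt.comp x (hproj j)
    convert this using 1
    ext v
    simp [mul_comm]
  have hext' : IsLocalExtrOn (fun y : Fin n → ℝ => ∑ j, s (y j))
      {y : Fin n → ℝ | ∀ i, f i y = f i x} x := by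
    convert hext using 2
    ext y
    simp only [hf, Set.mem_setOf_eq, Fin.forall_fin_two, Matrix.cons_val_zero,
      Matrix.cons_val_one, Matrix.head_cons, hx1, hx2]
  obtain ⟨Λ, Λ₀, hne, hlin⟩ := hext'.exists_multipliers_of_hasStrictFDerivAt
    (f' := f') (fun i => by fin_cases i <;> assumption) hφ
  -- evaluate the linear identity
  have heval : ∀ v : Fin n → ℝ,
      Λ 0 * (∑ j, v j) + Λ 1 * (∑ j, 2 * x j * v j) + Λ₀ * (∑ j, deriv s (x j) * v j) = 0 := by
    intro v
    have := congrFun (congrArg (DFunLike.coe) hlin) v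
    simpa [hf', hφ', Fin.sum_univ_two, Finset.mul_sum, ContinuousLinearMap.sum_apply,
      mul_assoc, hpr] using this
  -- Λ₀ ≠ 0
  have hΛ₀ : Λ₀ ≠ 0 := by
    intro h0
    apply hne
    have h1 : Λ 1 = 0 := by
      have := heval x
      rw [h0] at this
      have hx2' : ∑ j, 2 * x j * x j = 2 * d := by
        rw [← hx2, Finset.mul_sum]; congr 1; ext j; ring
      rw [hx1, hx2', mul_zero, zero_add, zero_mul, add_zero] at this
      have : Λ 1 * (2 * d) = 0 := this
      rcases mul_eq_zero.1 this with h | h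
      · exact h
      · linarith
    have h0' : Λ 0 = 0 := by
      have := heval 1
      simp only [h0, h1, Pi.one_apply, mul_one, zero_mul, add_zero, zero_add] at this
      have hn0 : (n : ℝ) ≠ 0 := by positivity
      have : Λ 0 * n = 0 := by simpa using this
      exact (mul_eq_zero.1 this).resolve_right hn0
    ext i
    · fin_cases i <;> simp [h0', h1]
    · simp [h0]
  have key : ∀ j, deriv s (x j) = (-(Λ 1) / Λ₀ * 2) * x j + (-(Λ 0) / Λ₀) := by
    intro j
    have := heval (Pi.single j 1)
    simp only [Pi.single_apply, mul_ite, mul_one, mul_zero, Finset.sum_ite_eq',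
      Finset.mem_univ, if_true] at this
    field_simp
    linear_combination this
  refine ⟨⟨_, _, key⟩, fun hcard => ?_⟩
  calc (Set.range x).encard ≤ {t : ℝ | deriv s t = (-(Λ 1) / Λ₀ * 2) * t + (-(Λ 0) / Λ₀)}.encard := by
        apply Set.encard_mono
        rintro t ⟨j, rfl⟩
        exact key j
    _ ≤ 3 := hcard _ _
end
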